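/- arXiv:2406.17230 — 4 statements merged into one kernel-verified Lean document; each statement's English description precedes it below -/
import Mathlib

section
/- Let ρ be a separable bipartite density matrix on ℂ^{d_A}⊗ℂ^{d_B}. Then for all real numbers x, y ≥ 0 and every positive integer n, the extended correlation tensor satisfies ‖M_{x,y}^{(n)}‖_tr ≤ √( ((n x² + d_A − 1)/(κ_A d_A)) · ((n y² + d_B − 1)/(κ_B d_B)) ). -/
open Matrix BigOperators Kronecker
open scoped ComplexOrder

/-- The trace norm (sum of singular values) of a complex matrix. -/
noncomputable def traceNorm {m k : Type*} [Fintype m] [Fintype k] [DecidableEq k]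
    (X : Matrix m k ℂ) : ℝ :=
  ∑ i, Real.sqrt ((Matrix.isHermitian_conjTranspose_mul_self X).eigenvalues i)

/-- A density matrix: positive semidefinite with trace one. -/
def IsDensityMatrix {d : Type*} [Fintype d] [DecidableEq d] (ρ : Matrix d d ℂ) : Prop :=
  ρ.PosSemidef ∧ ρ.trace = 1

/-- Separability of a bipartite state (finite convex mixture of product density matrices). -/
def IsSeparableState (dA dB : ℕ)
    (ρ : Matrix (Fin dA × Fin dB) (Fin dA × Fin dB) ℂ) : Prop :=
  ∃ (N : ℕ) (p : Fin N → ℝ) (ρA : Fin N → Matrix (Fin dA) (Fin dA) ℂ)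
    (ρB : Fin N → Matrix (Fin dB) (Fin dB) ℂ),
    (∀ i, 0 ≤ p i) ∧ (∑ i, p i) = 1 ∧
    (∀ i, IsDensityMatrix (ρA i)) ∧ (∀ i, IsDensityMatrix (ρB i)) ∧
    ρ = ∑ i, (p i : ℂ) • (ρA i ⊗ₖ ρB i)

/-- The extended correlation tensor `M_{x,y}^{(n)}` built from the Bloch data `r, s, T`. -/
noncomputable def extCorrTensor (dA dB n : ℕ) (κA κB x y : ℝ)
    (r : Fin (dA ^ 2 - 1) → ℂ) (s : Fin (dB ^ 2 - 1) → ℂ)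
    (T : Matrix (Fin (dA ^ 2 - 1)) (Fin (dB ^ 2 - 1)) ℂ) :
    Matrix (Fin n ⊕ Fin (dA ^ 2 - 1)) (Fin n ⊕ Fin (dB ^ 2 - 1)) ℂ :=
  Matrix.fromBlocks
    (Matrix.of fun _ _ => ((x * y / Real.sqrt (κA * κB * dA * dB) : ℝ) : ℂ))
    (Matrix.of fun _ j => ((x / Real.sqrt (κA * dA) : ℝ) : ℂ) * s j)
    (Matrix.of fun i _ => ((y / Real.sqrt (κB * dB) : ℝ) : ℂ) * r i)
    T


section Core
variable {m k : Type*} [Fintype m] [Fintype k] [DecidableEq k]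

local notation "C" => (starRingEnd ℂ)

/-- Bessel-type inequality with possibly degenerate orthonormal family, sums form. -/
lemma bessel_sums (w : k → m → ℂ) (e : k → ℝ) (he1 : ∀ j, e j ≤ 1)
    (h : ∀ j l, ∑ a, C (w j a) * w l a = if j = l then ((e j : ℝ) : ℂ) else 0)
    (u : m → ℂ) :
    ∑ j, Complex.normSq (∑ a, C (w j a) * u a) ≤ ∑ a, Complex.normSq (u a) := by
  classical
  set β : k → ℂ := fun j => ∑ a, C (w j a) * u a with hβ
  set g : m → ℂ := fun a => ∑ j, β j * w j a with hg
  set S : ℝ := ∑ j, Complex.normSq (β j) with hS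
  have hCβ : ∀ j, C (β j) = ∑ a, w j a * C (u a) := by
    intro j
    rw [hβ]; simp only [map_sum, _root_.map_mul, Complex.conj_conj]
  have h2 : ∑ a, u a * C (g a) = (S : ℂ) := by
    calc ∑ a, u a * C (g a) = ∑ a, ∑ j, C (β j) * (C (w j a) * u a) := by
          refine Finset.sum_congr rfl fun a _ => ?_
          rw [hg]; simp only [map_sum, _root_.map_mul, Finset.mul_sum]
          exact Finset.sum_congr rfl fun j _ => by ring
      _ = ∑ j, C (β j) * β j := by
          rw [Finset.sum_comm]
          refine Finset.sum_congr rfl fun j _ => ?_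
          rw [hβ, Finset.mul_sum]
      _ = (S : ℂ) := by
          rw [hS]; push_cast
          exact Finset.sum_congr rfl fun j _ => Complex.normSq_eq_conj_mul_self.symm
  have h3 : ∑ a, Complex.normSq (g a) = ∑ j, e j * Complex.normSq (β j) := by
    have hc : ∑ a, (Complex.normSq (g a) : ℂ) = ∑ j, ((e j : ℂ)) * Complex.normSq (β j) := by
      calc ∑ a, (Complex.normSq (g a) : ℂ) = ∑ a, C (g a) * g a := by
            exact Finset.sum_congr rfl fun a _ => Complex.normSq_eq_conj_mul_self
        _ = ∑ a, ∑ j, ∑ l, (C (β j) * β l) * (C (w j a) * w l a) := by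
            refine Finset.sum_congr rfl fun a _ => ?_
            rw [hg]; simp only [map_sum, _root_.map_mul, Finset.sum_mul, Finset.mul_sum]
            rw [Finset.sum_comm]
            refine Finset.sum_congr rfl fun j _ => Finset.sum_congr rfl fun l _ => by ring
        _ = ∑ j, ∑ l, (C (β j) * β l) * ∑ a, C (w j a) * w l a := by
            rw [Finset.sum_comm]
            refine Finset.sum_congr rfl fun j _ => ?_
            rw [Finset.sum_comm]
            exact Finset.sum_congr rfl fun l _ => (Finset.mul_sum _ _ _).symm
        _ = ∑ j, ((e j : ℂ)) * Complex.normSq (β j) := by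
            refine Finset.sum_congr rfl fun j _ => ?_
            rw [Finset.sum_eq_single j]
            · rw [h j j, if_pos rfl, ← Complex.normSq_eq_conj_mul_self]; ring
            · intro l _ hl; rw [h j l, if_neg (fun hh => hl hh.symm)]; ring
            · intro hh; exact absurd (Finset.mem_univ j) hh
    have := congrArg Complex.re hc
    simpa [Complex.re_sum] using this
  have key : (0:ℝ) ≤ ∑ a, Complex.normSq (u a - g a) :=
    Finset.sum_nonneg fun a _ => Complex.normSq_nonneg _
  have hexp : ∑ a, Complex.normSq (u a - g a)
      = (∑ a, Complex.normSq (u a)) + (∑ j, e j * Complex.normSq (β j)) - 2 * S := by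
    have h2re : ∑ a, (u a * C (g a)).re = S := by
      have := congrArg Complex.re h2
      simpa [Complex.re_sum] using this
    calc ∑ a, Complex.normSq (u a - g a)
        = ∑ a, (Complex.normSq (u a) + Complex.normSq (g a) - 2 * (u a * C (g a)).re) := by
          exact Finset.sum_congr rfl fun a _ => Complex.normSq_sub _ _
      _ = (∑ a, Complex.normSq (u a)) + (∑ a, Complex.normSq (g a))
            - 2 * ∑ a, (u a * C (g a)).re := by
          rw [Finset.sum_sub_distrib, Finset.sum_add_distrib, Finset.mul_sum]
      _ = _ := by rw [h3, h2re]
  have hE : ∑ j, e j * Complex.normSq (β j) ≤ S := by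
    rw [hS]
    exact Finset.sum_le_sum fun j _ => by
      nlinarith [Complex.normSq_nonneg (β j), he1 j]
  rw [hexp] at key
  have : S ≤ ∑ a, Complex.normSq (u a) := by linarith
  simpa [hS, hβ] using this

end Core

section Main
variable {m k : Type*} [Fintype m] [Fintype k] [DecidableEq k]

local notation "C" => (starRingEnd ℂ)

lemma traceNorm_le_sum {N : ℕ} (M : Matrix m k ℂ) (u : Fin N → m → ℂ) (v : Fin N → k → ℂ)
    (hM : M = ∑ i, Matrix.vecMulVec (u i) (v i)) :
    traceNorm M ≤ ∑ i, Real.sqrt (∑ a, Complex.normSq (u i a)) *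
      Real.sqrt (∑ b, Complex.normSq (v i b)) := by
  classical
  have hA := Matrix.isHermitian_conjTranspose_mul_self M
  set Uv : Matrix k k ℂ := (hA.eigenvectorUnitary : Matrix k k ℂ) with hUv
  set lam : k → ℝ := hA.eigenvalues with hlam
  have hspec : Mᴴ * M = Uv * Matrix.diagonal (fun j => (lam j : ℂ)) * star Uv := by
    convert hA.spectral_theorem
    rw [Unitary.conjStarAlgAut_apply]; rfl
  have hU1 : star Uv * Uv = 1 := Matrix.mem_unitaryGroup_iff'.mp hA.eigenvectorUnitary.2
  have hU2 : Uv * star Uv = 1 := Matrix.mem_unitaryGroup_iff.mp hA.eigenvectorUnitary.2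
  have lamnn : ∀ j, 0 ≤ lam j := fun j =>
    (Matrix.posSemidef_conjTranspose_mul_self M).eigenvalues_nonneg j
  set z : k → k → ℂ := fun l a => Uv a l with hz
  set w : k → m → ℂ := fun l => M *ᵥ z l with hw
  -- column orthonormality
  have hcol : ∀ j l, star (z j) ⬝ᵥ z l = if j = l then (1:ℂ) else 0 := by
    intro j l
    have := congrFun (congrFun hU1 j) l
    simpa [Matrix.mul_apply, Matrix.one_apply, dotProduct, Matrix.star_apply,
      hz, eq_comm] using this
  -- eigen-relation for columns
  have hcolvec : ∀ l, (Mᴴ * M) *ᵥ z l = fun a => (lam l : ℂ) * z l a := by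
    intro l
    funext a
    have h1 : ((Mᴴ * M) * Uv) a l = ((Mᴴ * M) *ᵥ z l) a := by
      simp [Matrix.mul_apply, Matrix.mulVec, dotProduct, hz]
    have h2 : (Mᴴ * M) * Uv = Uv * Matrix.diagonal (fun j => (lam j : ℂ)) := by
      rw [hspec, Matrix.mul_assoc, Matrix.mul_assoc, hU1, Matrix.mul_one]
    rw [← h1, h2, Matrix.mul_diagonal]
    ring
  have hww : ∀ j l, star (w j) ⬝ᵥ w l = if j = l then ((lam l : ℝ) : ℂ) else 0 := by
    intro j l
    have : star (w j) ⬝ᵥ w l = star (z j) ⬝ᵥ ((Mᴴ * M) *ᵥ z l) := by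
      rw [hw]
      rw [Matrix.star_mulVec, ← Matrix.dotProduct_mulVec, ← Matrix.mulVec_mulVec]
    rw [this, hcolvec l]
    have : star (z j) ⬝ᵥ (fun a => (lam l : ℂ) * z l a) = (lam l : ℂ) * (star (z j) ⬝ᵥ z l) := by
      simp [dotProduct, Finset.mul_sum]; exact Finset.sum_congr rfl fun a _ => by ring
    rw [this, hcol j l]
    split <;> simp
  -- normalized singular-vector family
  set c : k → ℝ := fun j => if lam j = 0 then 0 else (Real.sqrt (lam j))⁻¹ with hc
  set e : k → ℝ := fun j => if lam j = 0 then 0 else 1 with he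
  set w' : k → m → ℂ := fun j a => ((c j : ℝ) : ℂ) * w j a with hw'
  have hstar : ∀ zz : ℂ, star zz = C zz := fun _ => rfl
  have he1 : ∀ j, e j ≤ 1 := by
    intro j; by_cases h : lam j = 0 <;> simp [he, h]
  have hcc : ∀ j, c j * c j * lam j = e j := by
    intro j
    by_cases h : lam j = 0
    · simp [hc, he, h]
    · have hpos : 0 < lam j := lt_of_le_of_ne (lamnn j) (Ne.symm h)
      have hs : Real.sqrt (lam j) * Real.sqrt (lam j) = lam j := Real.mul_self_sqrt (lamnn j)
      have hsne : Real.sqrt (lam j) ≠ 0 := ne_of_gt (Real.sqrt_pos.mpr hpos)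
      simp only [hc, he, if_neg h]
      field_simp
      rw [sq, hs]
  have hclam : ∀ j, c j * lam j = Real.sqrt (lam j) := by
    intro j
    by_cases h : lam j = 0
    · simp [hc, h]
    · have hpos : 0 < lam j := lt_of_le_of_ne (lamnn j) (Ne.symm h)
      have hs : Real.sqrt (lam j) * Real.sqrt (lam j) = lam j := Real.mul_self_sqrt (lamnn j)
      have hsne : Real.sqrt (lam j) ≠ 0 := ne_of_gt (Real.sqrt_pos.mpr hpos)
      simp only [hc, if_neg h]
      field_simp
      rw [sq, hs]
  have hww' : ∀ j l, ∑ a, C (w' j a) * w' l a = if j = l then ((e j : ℝ) : ℂ) else 0 := by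
    intro j l
    have h0 : ∑ a, C (w' j a) * w' l a
        = ((c j : ℝ) : ℂ) * ((c l : ℝ) : ℂ) * (star (w j) ⬝ᵥ w l) := by
      simp only [hw', dotProduct, Pi.star_apply, hstar, _root_.map_mul, Complex.conj_ofReal,
        Finset.mul_sum]
      exact Finset.sum_congr rfl fun a _ => by ring
    rw [h0, hww j l]
    by_cases hjl : j = l
    · subst hjl
      rw [if_pos rfl, if_pos rfl]
      rw [show ((c j : ℝ):ℂ) * ((c j : ℝ):ℂ) * ((lam j : ℝ):ℂ) = ((c j * c j * lam j : ℝ) : ℂ) by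
        push_cast; ring, hcc j]
    · rw [if_neg hjl, if_neg hjl, mul_zero]
  set α : Fin N → k → ℂ := fun i j => ∑ b, v i b * z j b with hα
  set γ : Fin N → k → ℂ := fun i j => ∑ a, C (w' j a) * u i a with hγ
  have hMv : ∀ j a, w j a = ∑ i, u i a * α i j := by
    intro j a
    have : w j a = ∑ b, M a b * z j b := by rw [hw]; simp [Matrix.mulVec, dotProduct]
    rw [this, hM, hα]
    simp only [Matrix.sum_apply, Matrix.vecMulVec_apply, Finset.sum_mul, Finset.mul_sum]
    rw [Finset.sum_comm]
    exact Finset.sum_congr rfl fun i _ => Finset.sum_congr rfl fun b _ => by ring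
  have heq : ∀ j, (∑ i, α i j * γ i j) = ((Real.sqrt (lam j) : ℝ) : ℂ) := by
    intro j
    calc ∑ i, α i j * γ i j = ∑ i, ∑ a, C (w' j a) * (u i a * α i j) := by
          refine Finset.sum_congr rfl fun i _ => ?_
          rw [hγ, Finset.mul_sum]
          exact Finset.sum_congr rfl fun a _ => by ring
      _ = ∑ a, C (w' j a) * ∑ i, u i a * α i j := by
          rw [Finset.sum_comm]
          exact Finset.sum_congr rfl fun a _ => (Finset.mul_sum _ _ _).symm
      _ = ∑ a, C (w' j a) * w j a := by
          exact Finset.sum_congr rfl fun a _ => by rw [← hMv j a]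
      _ = ((c j : ℝ) : ℂ) * (star (w j) ⬝ᵥ w j) := by
          simp only [hw', dotProduct, Pi.star_apply, hstar, _root_.map_mul, Complex.conj_ofReal,
            Finset.mul_sum]
          exact Finset.sum_congr rfl fun a _ => by ring
      _ = ((c j : ℝ) : ℂ) * ((lam j : ℝ) : ℂ) := by rw [hww j j, if_pos rfl]
      _ = ((Real.sqrt (lam j) : ℝ) : ℂ) := by
          rw [← hclam j]; push_cast; ring
  -- Bessel bounds
  have hbesselγ : ∀ i, ∑ j, Complex.normSq (γ i j) ≤ ∑ a, Complex.normSq (u i a) := by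
    intro i
    exact bessel_sums w' e he1 hww' (u i)
  have hbesselα : ∀ i, ∑ j, Complex.normSq (α i j) ≤ ∑ b, Complex.normSq (v i b) := by
    intro i
    have horth : ∀ j l, ∑ b, C ((fun j b => C (z j b)) j b) * (fun j b => C (z j b)) l b
        = if j = l then (((fun _ => (1:ℝ)) j : ℝ) : ℂ) else 0 := by
      intro j l
      have : ∑ b, C (C (z j b)) * C (z l b) = C (∑ b, C (z j b) * z l b) := by
        rw [map_sum]
        exact Finset.sum_congr rfl fun b _ => by
          rw [_root_.map_mul, Complex.conj_conj]
      rw [this]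
      have hc2 : ∑ b, C (z j b) * z l b = if j = l then (1:ℂ) else 0 := by
        have := hcol j l
        simpa [dotProduct, Pi.star_apply] using this
      rw [hc2]
      split <;> simp
    have := bessel_sums (fun j b => C (z j b)) (fun _ => (1:ℝ)) (fun _ => le_refl 1) horth (v i)
    have hconv : ∀ j, (∑ b, C ((fun j b => C (z j b)) j b) * v i b) = α i j := by
      intro j
      rw [hα]
      exact Finset.sum_congr rfl fun b _ => by rw [Complex.conj_conj]; ring
    calc ∑ j, Complex.normSq (α i j)
        = ∑ j, Complex.normSq (∑ b, C ((fun j b => C (z j b)) j b) * v i b) := by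
          exact Finset.sum_congr rfl fun j _ => by rw [hconv j]
      _ ≤ ∑ b, Complex.normSq (v i b) := this
  -- Cauchy-Schwarz
  have hCS : ∀ (f g : k → ℝ), (∀ j, 0 ≤ f j) → (∀ j, 0 ≤ g j) →
      ∑ j, f j * g j ≤ Real.sqrt (∑ j, f j ^ 2) * Real.sqrt (∑ j, g j ^ 2) := by
    intro f g hf hg
    have h1 := Finset.sum_mul_sq_le_sq_mul_sq Finset.univ f g
    have h2 : 0 ≤ ∑ j, f j * g j := Finset.sum_nonneg fun j _ => mul_nonneg (hf j) (hg j)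
    have h3 : ∑ j, f j * g j = Real.sqrt ((∑ j, f j * g j) ^ 2) := (Real.sqrt_sq h2).symm
    rw [h3, ← Real.sqrt_mul (Finset.sum_nonneg fun j _ => sq_nonneg (f j))]
    exact Real.sqrt_le_sqrt h1
  -- final chain
  have h5 : traceNorm M = ∑ j, Real.sqrt (lam j) := rfl
  rw [h5]
  calc ∑ j, Real.sqrt (lam j) = ∑ j, (∑ i, α i j * γ i j).re := by
        refine Finset.sum_congr rfl fun j _ => ?_
        rw [heq j]; simp
    _ = (∑ j, ∑ i, α i j * γ i j).re := by rw [Complex.re_sum]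
    _ = (∑ i, ∑ j, α i j * γ i j).re := by rw [Finset.sum_comm]
    _ = ∑ i, (∑ j, α i j * γ i j).re := by rw [Complex.re_sum]
    _ ≤ ∑ i, ‖∑ j, α i j * γ i j‖ :=
        Finset.sum_le_sum fun i _ => Complex.re_le_norm _
    _ ≤ ∑ i, ∑ j, ‖α i j * γ i j‖ :=
        Finset.sum_le_sum fun i _ => norm_sum_le _ _
    _ = ∑ i, ∑ j, ‖γ i j‖ * ‖α i j‖ := by
        refine Finset.sum_congr rfl fun i _ => Finset.sum_congr rfl fun j _ => ?_
        rw [norm_mul]; ring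
    _ ≤ ∑ i, Real.sqrt (∑ j, ‖γ i j‖ ^ 2) * Real.sqrt (∑ j, ‖α i j‖ ^ 2) :=
        Finset.sum_le_sum fun i _ => hCS _ _ (fun j => norm_nonneg _)
          (fun j => norm_nonneg _)
    _ ≤ ∑ i, Real.sqrt (∑ a, Complex.normSq (u i a)) * Real.sqrt (∑ b, Complex.normSq (v i b)) := by
        refine Finset.sum_le_sum fun i _ => ?_
        have e1 : ∑ j, ‖γ i j‖ ^ 2 = ∑ j, Complex.normSq (γ i j) :=
          Finset.sum_congr rfl fun j _ => Complex.sq_norm _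
        have e2 : ∑ j, ‖α i j‖ ^ 2 = ∑ j, Complex.normSq (α i j) :=
          Finset.sum_congr rfl fun j _ => Complex.sq_norm _
        rw [e1, e2]
        exact mul_le_mul (Real.sqrt_le_sqrt (hbesselγ i)) (Real.sqrt_le_sqrt (hbesselα i))
          (Real.sqrt_nonneg _) (Real.sqrt_nonneg _)
end Main

section Part2
local notation "C" => (starRingEnd ℂ)

lemma purity_le_one {d : Type*} [Fintype d] [DecidableEq d] {σ : Matrix d d ℂ}
    (h1 : σ.PosSemidef) (h2 : σ.trace = 1) : (σᴴ * σ).trace.re ≤ 1 := by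
  have hH : σ.IsHermitian := h1.isHermitian
  set Uv : Matrix d d ℂ := (hH.eigenvectorUnitary : Matrix d d ℂ) with hUv
  set μ : d → ℝ := hH.eigenvalues with hμ
  have hU1 : star Uv * Uv = 1 := Matrix.mem_unitaryGroup_iff'.mp hH.eigenvectorUnitary.2
  have hspec : σ = Uv * Matrix.diagonal (fun j => (μ j : ℂ)) * star Uv := by
    convert hH.spectral_theorem
    rw [Unitary.conjStarAlgAut_apply]; rfl
  have hμnn : ∀ j, 0 ≤ μ j := fun j => h1.eigenvalues_nonneg j
  have htrd : ∀ (D : Matrix d d ℂ), (Uv * D * star Uv).trace = D.trace := by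
    intro D
    rw [Matrix.trace_mul_cycle, hU1, Matrix.one_mul]
  have hsum1 : ∑ j, μ j = 1 := by
    have : σ.trace = ∑ j, ((μ j : ℝ) : ℂ) := by
      rw [hspec, htrd, Matrix.trace_diagonal]
    rw [h2] at this
    have := congrArg Complex.re this.symm
    simpa [Complex.re_sum] using this
  have hsq : (σᴴ * σ).trace = ∑ j, (((μ j) ^ 2 : ℝ) : ℂ) := by
    rw [hH.eq]  -- σᴴ = σ
    have hmm : σ * σ = Uv * (Matrix.diagonal (fun j => (μ j : ℂ)) *
        Matrix.diagonal (fun j => (μ j : ℂ))) * star Uv := by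
      conv_lhs => rw [hspec]
      have hmid : Matrix.diagonal (fun j => (μ j : ℂ)) * (star Uv * Uv) *
          Matrix.diagonal (fun j => (μ j : ℂ))
          = Matrix.diagonal (fun j => (μ j : ℂ)) * Matrix.diagonal (fun j => (μ j : ℂ)) := by
        rw [hU1, Matrix.mul_one]
      rw [← hmid]
      noncomm_ring
    rw [hmm, htrd, Matrix.diagonal_mul_diagonal, Matrix.trace_diagonal]
    push_cast
    ring_nf
  have hle : ∑ j, (μ j) ^ 2 ≤ 1 := by
    have h1j : ∀ j, μ j ≤ 1 := by
      intro j
      calc μ j ≤ ∑ l, μ l := Finset.single_le_sum (fun l _ => hμnn l) (Finset.mem_univ j)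
        _ = 1 := hsum1
    calc ∑ j, (μ j) ^ 2 ≤ ∑ j, μ j := Finset.sum_le_sum fun j _ => by nlinarith [hμnn j, h1j j]
      _ = 1 := hsum1
  rw [hsq]
  simpa [Complex.re_sum, ← Complex.ofReal_pow] using hle

lemma bloch_facts {d : Type*} [Fintype d] [DecidableEq d] {n1 : ℕ} {κ : ℝ} (hκ : 0 < κ)
    (hd : 2 ≤ Fintype.card d)
    (G : Fin n1 → Matrix d d ℂ)
    (hGtr : ∀ i, (G i).trace = 0)
    (hGorth : ∀ i j, ((G i)ᴴ * G j).trace = if i = j then (κ:ℂ) else 0)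
    {σ : Matrix d d ℂ} (hσ : σ.PosSemidef) (htr : σ.trace = 1)
    {a : Fin n1 → ℂ}
    (ha : σ = ((Fintype.card d : ℂ))⁻¹ • 1 + ∑ k, a k • G k) :
    (∀ j, ((G j)ᴴ * σ).trace = (κ : ℂ) * a j) ∧
      ∑ k, Complex.normSq (a k) ≤ (Fintype.card d - 1)/(κ * Fintype.card d) := by
  set dd : ℕ := Fintype.card d with hdd
  have hdne : ((dd : ℂ)) ≠ 0 := by
    simp only [Ne, Nat.cast_eq_zero]; omega
  have hGHtr : ∀ i, (G i)ᴴ.trace = 0 := by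
    intro i; rw [Matrix.trace_conjTranspose, hGtr i, star_zero]
  have hext : ∀ j, ((G j)ᴴ * σ).trace = (κ : ℂ) * a j := by
    intro j
    rw [ha, Matrix.mul_add, Matrix.trace_add]
    have t1 : ((G j)ᴴ * ((dd : ℂ))⁻¹ • (1 : Matrix d d ℂ)).trace = 0 := by
      rw [Matrix.mul_smul, Matrix.mul_one, Matrix.trace_smul, hGHtr j, smul_zero]
    have t2 : ((G j)ᴴ * ∑ k, a k • G k).trace = (κ:ℂ) * a j := by
      rw [Matrix.mul_sum, Matrix.trace_sum]
      rw [Finset.sum_eq_single j]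
      · rw [Matrix.mul_smul, Matrix.trace_smul, hGorth j j, if_pos rfl]
        simp [mul_comm]
      · intro l _ hl
        rw [Matrix.mul_smul, Matrix.trace_smul, hGorth j l, if_neg (fun hh => hl hh.symm),
          smul_zero]
      · intro hh; exact absurd (Finset.mem_univ j) hh
    rw [t1, t2, zero_add]
  refine ⟨hext, ?_⟩
  -- purity computation
  have hσH : σᴴ = ((dd : ℂ))⁻¹ • 1 + ∑ k, C (a k) • (G k)ᴴ := by
    rw [ha, Matrix.conjTranspose_add, Matrix.conjTranspose_smul, Matrix.conjTranspose_one]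
    congr 1
    · congr 1
      rw [star_inv₀]
      congr 1
      exact Complex.conj_natCast dd
    · rw [Matrix.conjTranspose_sum]
      exact Finset.sum_congr rfl fun k _ => Matrix.conjTranspose_smul _ _
  have hsq : (σᴴ * σ).trace = ((dd : ℂ))⁻¹ + (κ:ℂ) * ∑ k, (Complex.normSq (a k) : ℂ) := by
    conv_lhs => rw [hσH, ha]
    rw [Matrix.add_mul, Matrix.mul_add, Matrix.mul_add, Matrix.trace_add, Matrix.trace_add,
      Matrix.trace_add]
    have t11 : ((((dd : ℂ))⁻¹ • (1: Matrix d d ℂ)) * (((dd : ℂ))⁻¹ • 1)).trace = ((dd : ℂ))⁻¹ := by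
      rw [Matrix.smul_mul, Matrix.mul_smul, Matrix.one_mul, Matrix.trace_smul, Matrix.trace_smul,
        Matrix.trace_one]
      rw [smul_eq_mul, smul_eq_mul]
      field_simp
      rw [hdd]
    have t12 : ((((dd : ℂ))⁻¹ • (1: Matrix d d ℂ)) * ∑ k, a k • G k).trace = 0 := by
      rw [Matrix.smul_mul, Matrix.one_mul, Matrix.trace_smul]
      rw [Matrix.trace_sum]
      have : ∀ k, (a k • G k).trace = 0 := fun k => by
        rw [Matrix.trace_smul, hGtr k, smul_zero]
      rw [Finset.sum_congr rfl fun k _ => this k]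
      simp
    have t21 : (((∑ k, C (a k) • (G k)ᴴ)) * (((dd : ℂ))⁻¹ • 1)).trace = 0 := by
      rw [Matrix.mul_smul, Matrix.mul_one, Matrix.trace_smul, Matrix.trace_sum]
      have : ∀ k, (C (a k) • (G k)ᴴ).trace = 0 := fun k => by
        rw [Matrix.trace_smul, hGHtr k, smul_zero]
      rw [Finset.sum_congr rfl fun k _ => this k]
      simp
    have t22 : ((∑ k, C (a k) • (G k)ᴴ) * ∑ l, a l • G l).trace
        = (κ:ℂ) * ∑ k, (Complex.normSq (a k) : ℂ) := by
      rw [Matrix.sum_mul, Matrix.trace_sum]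
      have hterm : ∀ k, ((C (a k) • (G k)ᴴ) * ∑ l, a l • G l).trace
          = (κ:ℂ) * (Complex.normSq (a k) : ℂ) := by
        intro k
        rw [Matrix.smul_mul, Matrix.trace_smul, Matrix.mul_sum, Matrix.trace_sum]
        rw [Finset.sum_eq_single k]
        · rw [Matrix.mul_smul, Matrix.trace_smul, hGorth k k, if_pos rfl]
          rw [smul_eq_mul, smul_eq_mul, Complex.normSq_eq_conj_mul_self]
          ring
        · intro l _ hl
          rw [Matrix.mul_smul, Matrix.trace_smul, hGorth k l, if_neg (fun hh => hl hh.symm),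
            smul_zero]
        · intro hh; exact absurd (Finset.mem_univ k) hh
      rw [Finset.sum_congr rfl fun k _ => hterm k, ← Finset.mul_sum]
    rw [t11, t12, t21, t22]
    ring
  have hre := purity_le_one hσ htr
  rw [hsq] at hre
  have hre2 : (dd : ℝ)⁻¹ + κ * ∑ k, Complex.normSq (a k) ≤ 1 := by
    have : (((dd : ℂ))⁻¹ + (κ:ℂ) * ∑ k, (Complex.normSq (a k) : ℂ)).re
        = (dd : ℝ)⁻¹ + κ * ∑ k, Complex.normSq (a k) := by
      push_cast
      simp
    rw [this] at hre
    exact hre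
  have hddpos : (0:ℝ) < dd := by
    have : (2:ℝ) ≤ dd := by exact_mod_cast hd
    linarith
  rw [div_eq_inv_mul]
  have h3 : κ * ∑ k, Complex.normSq (a k) ≤ 1 - (dd:ℝ)⁻¹ := by linarith
  calc ∑ k, Complex.normSq (a k) = κ⁻¹ * (κ * ∑ k, Complex.normSq (a k)) := by
        field_simp
    _ ≤ κ⁻¹ * (1 - (dd:ℝ)⁻¹) := by
        apply mul_le_mul_of_nonneg_left h3 (le_of_lt (inv_pos.mpr hκ))
    _ = (κ * dd)⁻¹ * (dd - 1) := by
        field_simp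

end Part2

section Part3
local notation "C" => (starRingEnd ℂ)

variable {dA dB : ℕ}

-- trace of (P⊗Q) against a kronecker product
lemma trace_kron_mul_kron {P X : Matrix (Fin dA) (Fin dA) ℂ} {Q Y : Matrix (Fin dB) (Fin dB) ℂ} :
    ((P ⊗ₖ Q) * (X ⊗ₖ Y)).trace = (P * X).trace * (Q * Y).trace := by
  rw [← Matrix.mul_kronecker_mul, Matrix.trace_kronecker]

lemma trace_kron_exp (nA nB : ℕ) (GA : Fin nA → Matrix (Fin dA) (Fin dA) ℂ)
    (GB : Fin nB → Matrix (Fin dB) (Fin dB) ℂ)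
    (r : Fin nA → ℂ) (s : Fin nB → ℂ) (T : Matrix (Fin nA) (Fin nB) ℂ)
    (ρ : Matrix (Fin dA × Fin dB) (Fin dA × Fin dB) ℂ)
    (P : Matrix (Fin dA) (Fin dA) ℂ) (Q : Matrix (Fin dB) (Fin dB) ℂ)
    (hexp : ρ =
      ((dA : ℂ)⁻¹ • (1 : Matrix (Fin dA) (Fin dA) ℂ)) ⊗ₖ
        ((dB : ℂ)⁻¹ • (1 : Matrix (Fin dB) (Fin dB) ℂ))
      + ∑ i, r i • (GA i ⊗ₖ ((dB : ℂ)⁻¹ • (1 : Matrix (Fin dB) (Fin dB) ℂ)))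
      + ∑ j, s j • (((dA : ℂ)⁻¹ • (1 : Matrix (Fin dA) (Fin dA) ℂ)) ⊗ₖ GB j)
      + ∑ i, ∑ j, T i j • (GA i ⊗ₖ GB j)) :
    ((P ⊗ₖ Q) * ρ).trace
      = (dA:ℂ)⁻¹ * (dB:ℂ)⁻¹ * (P.trace * Q.trace)
      + ∑ i, r i * ((dB:ℂ)⁻¹ * ((P * GA i).trace * Q.trace))
      + ∑ j, s j * ((dA:ℂ)⁻¹ * (P.trace * (Q * GB j).trace))
      + ∑ i, ∑ j, T i j * ((P * GA i).trace * (Q * GB j).trace) := by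
  rw [hexp]
  rw [Matrix.mul_add, Matrix.mul_add, Matrix.mul_add, Matrix.trace_add, Matrix.trace_add,
    Matrix.trace_add]
  congr 1
  congr 1
  congr 1
  · rw [Matrix.smul_kronecker, Matrix.kronecker_smul, Matrix.mul_smul, Matrix.mul_smul,
      Matrix.trace_smul, Matrix.trace_smul, trace_kron_mul_kron, Matrix.mul_one, Matrix.mul_one]
    simp [smul_eq_mul]; ring
  · rw [Matrix.mul_sum, Matrix.trace_sum]
    refine Finset.sum_congr rfl fun i _ => ?_
    rw [Matrix.mul_smul, Matrix.trace_smul, Matrix.kronecker_smul, Matrix.mul_smul,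
      Matrix.trace_smul, trace_kron_mul_kron, Matrix.mul_one]
    simp [smul_eq_mul]
  · rw [Matrix.mul_sum, Matrix.trace_sum]
    refine Finset.sum_congr rfl fun j _ => ?_
    rw [Matrix.mul_smul, Matrix.trace_smul, Matrix.smul_kronecker, Matrix.mul_smul,
      Matrix.trace_smul, trace_kron_mul_kron, Matrix.mul_one]
    simp [smul_eq_mul]
  · rw [Matrix.mul_sum, Matrix.trace_sum]
    refine Finset.sum_congr rfl fun i _ => ?_
    rw [Matrix.mul_sum, Matrix.trace_sum]
    refine Finset.sum_congr rfl fun j _ => ?_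
    rw [Matrix.mul_smul, Matrix.trace_smul, trace_kron_mul_kron]
    simp [smul_eq_mul]

end Part3

section SepSide
variable {dA dB : ℕ}
lemma trace_kron_sep {N : ℕ} (p : Fin N → ℝ)
    (ρA : Fin N → Matrix (Fin dA) (Fin dA) ℂ) (ρB : Fin N → Matrix (Fin dB) (Fin dB) ℂ)
    (P : Matrix (Fin dA) (Fin dA) ℂ) (Q : Matrix (Fin dB) (Fin dB) ℂ) :
    ((P ⊗ₖ Q) * ∑ i, (p i : ℂ) • (ρA i ⊗ₖ ρB i)).trace
      = ∑ i, (p i : ℂ) * ((P * ρA i).trace * (Q * ρB i).trace) := by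
  rw [Matrix.mul_sum, Matrix.trace_sum]
  refine Finset.sum_congr rfl fun i _ => ?_
  rw [Matrix.mul_smul, Matrix.trace_smul, trace_kron_mul_kron]
  simp [smul_eq_mul]
end SepSide


set_option maxHeartbeats 1000000 in
/-- **Theorem 1**: for a separable bipartite density matrix the trace norm of the extended
correlation tensor is bounded by
`√(((n x² + d_A − 1)/(κ_A d_A)) ((n y² + d_B − 1)/(κ_B d_B)))`. -/
theorem traceNorm_extCorrTensor_le_of_separable
    (dA dB : ℕ) (hdA : 2 ≤ dA) (hdB : 2 ≤ dB)
    (κA κB : ℝ) (hκA : 1 ≤ κA) (hκB : 1 ≤ κB)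
    (GA : Fin (dA ^ 2 - 1) → Matrix (Fin dA) (Fin dA) ℂ)
    (GB : Fin (dB ^ 2 - 1) → Matrix (Fin dB) (Fin dB) ℂ)
    (hGAtr : ∀ i, (GA i).trace = 0)
    (hGBtr : ∀ j, (GB j).trace = 0)
    (hGAorth : ∀ i j, ((GA i)ᴴ * GA j).trace = if i = j then (κA : ℂ) else 0)
    (hGBorth : ∀ i j, ((GB i)ᴴ * GB j).trace = if i = j then (κB : ℂ) else 0)
    (hGAspan : ∀ X : Matrix (Fin dA) (Fin dA) ℂ, X.trace = 0 →
      X ∈ Submodule.span ℂ (Set.range GA))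
    (hGBspan : ∀ X : Matrix (Fin dB) (Fin dB) ℂ, X.trace = 0 →
      X ∈ Submodule.span ℂ (Set.range GB))
    (ρ : Matrix (Fin dA × Fin dB) (Fin dA × Fin dB) ℂ)
    (hρ : IsDensityMatrix ρ)
    (hsep : IsSeparableState dA dB ρ)
    (r : Fin (dA ^ 2 - 1) → ℂ) (s : Fin (dB ^ 2 - 1) → ℂ)
    (T : Matrix (Fin (dA ^ 2 - 1)) (Fin (dB ^ 2 - 1)) ℂ)
    (hexp : ρ =
      ((dA : ℂ)⁻¹ • (1 : Matrix (Fin dA) (Fin dA) ℂ)) ⊗ₖ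
        ((dB : ℂ)⁻¹ • (1 : Matrix (Fin dB) (Fin dB) ℂ))
      + ∑ i, r i • (GA i ⊗ₖ ((dB : ℂ)⁻¹ • (1 : Matrix (Fin dB) (Fin dB) ℂ)))
      + ∑ j, s j • (((dA : ℂ)⁻¹ • (1 : Matrix (Fin dA) (Fin dA) ℂ)) ⊗ₖ GB j)
      + ∑ i, ∑ j, T i j • (GA i ⊗ₖ GB j))
    (x y : ℝ) (hx : 0 ≤ x) (hy : 0 ≤ y) (n : ℕ) (hn : 0 < n) :
    traceNorm (extCorrTensor dA dB n κA κB x y r s T) ≤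
      Real.sqrt (((n * x ^ 2 + dA - 1) / (κA * dA)) * ((n * y ^ 2 + dB - 1) / (κB * dB))) := by
    classical
  obtain ⟨N, p, ρA, ρB, hp0, hp1, hρA, hρB, hρsum⟩ := hsep
  have hdA0 : (dA : ℂ) ≠ 0 := by simp only [Ne, Nat.cast_eq_zero]; omega
  have hdB0 : (dB : ℂ) ≠ 0 := by simp only [Ne, Nat.cast_eq_zero]; omega
  have hκA0 : (0:ℝ) < κA := lt_of_lt_of_le one_pos hκA
  have hκB0 : (0:ℝ) < κB := lt_of_lt_of_le one_pos hκB
  have hκAc : (κA : ℂ) ≠ 0 := by exact_mod_cast ne_of_gt hκA0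
  have hκBc : (κB : ℂ) ≠ 0 := by exact_mod_cast ne_of_gt hκB0
  -- Bloch coefficients of the factors
  have htrA : ∀ i, (ρA i - (dA:ℂ)⁻¹ • 1).trace = 0 := by
    intro i
    rw [Matrix.trace_sub, (hρA i).2, Matrix.trace_smul, Matrix.trace_one]
    simp only [Fintype.card_fin, smul_eq_mul]
    rw [inv_mul_cancel₀ hdA0, sub_self]
  have htrB : ∀ i, (ρB i - (dB:ℂ)⁻¹ • 1).trace = 0 := by
    intro i
    rw [Matrix.trace_sub, (hρB i).2, Matrix.trace_smul, Matrix.trace_one]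
    simp only [Fintype.card_fin, smul_eq_mul]
    rw [inv_mul_cancel₀ hdB0, sub_self]
  choose a haEq using fun i => (Submodule.mem_span_range_iff_exists_fun ℂ).mp (hGAspan _ (htrA i))
  choose b hbEq using fun i => (Submodule.mem_span_range_iff_exists_fun ℂ).mp (hGBspan _ (htrB i))
  have hρAi : ∀ i, ρA i = (dA:ℂ)⁻¹ • 1 + ∑ k, a i k • GA k := by
    intro i
    rw [haEq i]
    abel
  have hρBi : ∀ i, ρB i = (dB:ℂ)⁻¹ • 1 + ∑ k, b i k • GB k := by
    intro i
    rw [hbEq i]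
    abel
  -- extraction and norm bound for each factor
  have hfA := fun i => bloch_facts (d := Fin dA) hκA0 (by simpa using hdA) GA hGAtr hGAorth
    (hρA i).1 (hρA i).2 (a := a i) (by simpa using hρAi i)
  have hfB := fun i => bloch_facts (d := Fin dB) hκB0 (by simpa using hdB) GB hGBtr hGBorth
    (hρB i).1 (hρB i).2 (a := b i) (by simpa using hρBi i)
  have hextA : ∀ i k, ((GA k)ᴴ * ρA i).trace = (κA : ℂ) * a i k := fun i => (hfA i).1
  have hextB : ∀ i l, ((GB l)ᴴ * ρB i).trace = (κB : ℂ) * b i l := fun i => (hfB i).1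
  have hnA : ∀ i, ∑ k, Complex.normSq (a i k) ≤ (dA - 1)/(κA * dA) := by
    intro i; have := (hfA i).2; simpa using this
  have hnB : ∀ i, ∑ l, Complex.normSq (b i l) ≤ (dB - 1)/(κB * dB) := by
    intro i; have := (hfB i).2; simpa using this
  -- traces of the generators
  have hGAHtr : ∀ k, (GA k)ᴴ.trace = 0 := fun k => by
    rw [Matrix.trace_conjTranspose, hGAtr k, star_zero]
  have hGBHtr : ∀ l, (GB l)ᴴ.trace = 0 := fun l => by
    rw [Matrix.trace_conjTranspose, hGBtr l, star_zero]
  -- matching the coefficients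
  have hT : ∀ k l, T k l = ∑ i, (p i : ℂ) * (a i k * b i l) := by
    intro k l
    have hL : (((GA k)ᴴ ⊗ₖ (GB l)ᴴ) * ρ).trace = (κA:ℂ) * (κB:ℂ) * T k l := by
      rw [trace_kron_exp (dA := dA) (dB := dB) _ _ GA GB r s T ρ (GA k)ᴴ (GB l)ᴴ hexp,
        hGAHtr k, hGBHtr l]
      simp only [mul_zero, zero_mul, Finset.sum_const_zero, add_zero, zero_add,
        hGAorth, hGBorth, mul_ite, ite_mul, Finset.sum_ite_eq, Finset.mem_univ, if_true]
      ring
    have hR : (((GA k)ᴴ ⊗ₖ (GB l)ᴴ) * ρ).trace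
        = (κA:ℂ) * (κB:ℂ) * ∑ i, (p i : ℂ) * (a i k * b i l) := by
      rw [hρsum, trace_kron_sep]
      rw [Finset.mul_sum]
      refine Finset.sum_congr rfl fun i _ => ?_
      rw [hextA i k, hextB i l]
      ring
    have := hL.symm.trans hR
    exact mul_left_cancel₀ (mul_ne_zero hκAc hκBc) this
  have hr : ∀ k, r k = ∑ i, (p i : ℂ) * a i k := by
    intro k
    have hL : (((GA k)ᴴ ⊗ₖ (1 : Matrix (Fin dB) (Fin dB) ℂ)) * ρ).trace = (κA:ℂ) * r k := by
      rw [trace_kron_exp (dA := dA) (dB := dB) _ _ GA GB r s T ρ (GA k)ᴴ 1 hexp,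
        hGAHtr k]
      have honeB : (1 : Matrix (Fin dB) (Fin dB) ℂ).trace = (dB : ℂ) := by
        rw [Matrix.trace_one]; simp
      have honeGB : ∀ j, ((1 : Matrix (Fin dB) (Fin dB) ℂ) * GB j).trace = 0 := fun j => by
        rw [Matrix.one_mul, hGBtr j]
      simp only [mul_zero, zero_mul, Finset.sum_const_zero, add_zero, zero_add,
        hGAorth, honeB, honeGB]
      rw [Finset.sum_eq_single k]
      · rw [if_pos rfl]
        field_simp
      · intro i _ hi; rw [if_neg (fun hh => hi hh.symm)]; ring
      · intro hh; exact absurd (Finset.mem_univ k) hh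
    have hR : (((GA k)ᴴ ⊗ₖ (1 : Matrix (Fin dB) (Fin dB) ℂ)) * ρ).trace
        = (κA:ℂ) * ∑ i, (p i : ℂ) * a i k := by
      rw [hρsum, trace_kron_sep]
      rw [Finset.mul_sum]
      refine Finset.sum_congr rfl fun i _ => ?_
      rw [hextA i k, Matrix.one_mul, (hρB i).2]
      ring
    have := hL.symm.trans hR
    exact mul_left_cancel₀ hκAc this
  have hs : ∀ l, s l = ∑ i, (p i : ℂ) * b i l := by
    intro l
    have hL : (((1 : Matrix (Fin dA) (Fin dA) ℂ) ⊗ₖ (GB l)ᴴ) * ρ).trace = (κB:ℂ) * s l := by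
      rw [trace_kron_exp (dA := dA) (dB := dB) _ _ GA GB r s T ρ 1 (GB l)ᴴ hexp,
        hGBHtr l]
      have honeA : (1 : Matrix (Fin dA) (Fin dA) ℂ).trace = (dA : ℂ) := by
        rw [Matrix.trace_one]; simp
      have honeGA : ∀ j, ((1 : Matrix (Fin dA) (Fin dA) ℂ) * GA j).trace = 0 := fun j => by
        rw [Matrix.one_mul, hGAtr j]
      simp only [mul_zero, zero_mul, Finset.sum_const_zero, add_zero, zero_add,
        hGBorth, honeA, honeGA]
      rw [Finset.sum_eq_single l]
      · rw [if_pos rfl]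
        field_simp
      · intro i _ hi; rw [if_neg (fun hh => hi hh.symm)]; ring
      · intro hh; exact absurd (Finset.mem_univ l) hh
    have hR : (((1 : Matrix (Fin dA) (Fin dA) ℂ) ⊗ₖ (GB l)ᴴ) * ρ).trace
        = (κB:ℂ) * ∑ i, (p i : ℂ) * b i l := by
      rw [hρsum, trace_kron_sep]
      rw [Finset.mul_sum]
      refine Finset.sum_congr rfl fun i _ => ?_
      rw [hextB i l, Matrix.one_mul, (hρA i).2]
      ring
    have := hL.symm.trans hR
    exact mul_left_cancel₀ hκBc this
  -- rank-one decomposition of the extended correlation tensor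
  have hdApos : (0:ℝ) < dA := by exact_mod_cast Nat.lt_of_lt_of_le Nat.zero_lt_two hdA
  have hdBpos : (0:ℝ) < dB := by exact_mod_cast Nat.lt_of_lt_of_le Nat.zero_lt_two hdB
  set sqA : ℝ := Real.sqrt (κA * dA) with hsqA
  set sqB : ℝ := Real.sqrt (κB * dB) with hsqB
  have hκAdA : (0:ℝ) < κA * dA := by positivity
  have hκBdB : (0:ℝ) < κB * dB := by positivity
  have hsqA2 : sqA * sqA = κA * dA := Real.mul_self_sqrt (le_of_lt hκAdA)
  have hsqB2 : sqB * sqB = κB * dB := Real.mul_self_sqrt (le_of_lt hκBdB)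
  have hsqApos : 0 < sqA := Real.sqrt_pos.mpr hκAdA
  have hsqBpos : 0 < sqB := Real.sqrt_pos.mpr hκBdB
  have hsqAB : Real.sqrt (κA * κB * dA * dB) = sqA * sqB := by
    rw [hsqA, hsqB, ← Real.sqrt_mul (le_of_lt hκAdA)]
    congr 1
    ring
  set U : Fin N → (Fin n ⊕ Fin (dA ^ 2 - 1)) → ℂ := fun i =>
    Sum.elim (fun _ => ((Real.sqrt (p i) * x / sqA : ℝ) : ℂ))
      (fun k => ((Real.sqrt (p i) : ℝ) : ℂ) * a i k) with hUdef
  set V : Fin N → (Fin n ⊕ Fin (dB ^ 2 - 1)) → ℂ := fun i =>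
    Sum.elim (fun _ => ((Real.sqrt (p i) * y / sqB : ℝ) : ℂ))
      (fun k => ((Real.sqrt (p i) : ℝ) : ℂ) * b i k) with hVdef
  have hpp : ∀ i, ((Real.sqrt (p i) : ℝ) : ℂ) * ((Real.sqrt (p i) : ℝ) : ℂ) = ((p i : ℝ) : ℂ) := by
    intro i
    rw [← Complex.ofReal_mul, Real.mul_self_sqrt (hp0 i)]
  have hMdec : extCorrTensor dA dB n κA κB x y r s T = ∑ i, Matrix.vecMulVec (U i) (V i) := by
    ext c d
    rw [Matrix.sum_apply]
    cases c with
    | inl c1 =>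
      cases d with
      | inl d1 =>
        show ((x * y / Real.sqrt (κA * κB * dA * dB) : ℝ) : ℂ) = _
        have hterm : ∀ i : Fin N, Matrix.vecMulVec (U i) (V i) (Sum.inl c1) (Sum.inl d1)
            = ((p i * (x * y / (sqA * sqB)) : ℝ) : ℂ) := by
          intro i
          rw [Matrix.vecMulVec_apply, hUdef, hVdef]
          simp only [Sum.elim_inl]
          rw [← Complex.ofReal_mul]
          congr 1
          have h1 : Real.sqrt (p i) * x / sqA * (Real.sqrt (p i) * y / sqB)
              = (Real.sqrt (p i) * Real.sqrt (p i)) * (x * y / (sqA * sqB)) := by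
            field_simp
          rw [h1, Real.mul_self_sqrt (hp0 i)]
        rw [Finset.sum_congr rfl fun i _ => hterm i, ← Complex.ofReal_sum]
        congr 1
        rw [← Finset.sum_mul, hp1, one_mul, hsqAB]
      | inr d2 =>
        show ((x / sqA : ℝ) : ℂ) * s d2 = _
        rw [hs d2, Finset.mul_sum]
        refine Finset.sum_congr rfl fun i _ => ?_
        rw [Matrix.vecMulVec_apply, hUdef, hVdef]
        simp only [Sum.elim_inl, Sum.elim_inr]
        push_cast
        rw [← hpp i]
        ring
    | inr c2 =>
      cases d with
      | inl d1 =>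
        show ((y / sqB : ℝ) : ℂ) * r c2 = _
        rw [hr c2, Finset.mul_sum]
        refine Finset.sum_congr rfl fun i _ => ?_
        rw [Matrix.vecMulVec_apply, hUdef, hVdef]
        simp only [Sum.elim_inl, Sum.elim_inr]
        push_cast
        rw [← hpp i]
        ring
      | inr d2 =>
        show T c2 d2 = _
        rw [hT c2 d2]
        refine Finset.sum_congr rfl fun i _ => ?_
        rw [Matrix.vecMulVec_apply, hUdef, hVdef]
        simp only [Sum.elim_inl, Sum.elim_inr]
        rw [← hpp i]
        ring
  -- apply the core trace-norm bound
  have hcore := traceNorm_le_sum (extCorrTensor dA dB n κA κB x y r s T) U V hMdec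
  set αA : ℝ := (n * x ^ 2 + dA - 1) / (κA * dA) with hαA
  set αB : ℝ := (n * y ^ 2 + dB - 1) / (κB * dB) with hαB
  have hαA0 : 0 ≤ αA := by
    apply div_nonneg _ (le_of_lt hκAdA)
    have : (2:ℝ) ≤ dA := by exact_mod_cast hdA
    nlinarith [sq_nonneg x]
  have hαB0 : 0 ≤ αB := by
    apply div_nonneg _ (le_of_lt hκBdB)
    have : (2:ℝ) ≤ dB := by exact_mod_cast hdB
    nlinarith [sq_nonneg y]
  have hUbound : ∀ i, ∑ t, Complex.normSq (U i t) ≤ p i * αA := by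
    intro i
    rw [Fintype.sum_sum_type]
    have e1 : ∀ c1 : Fin n, Complex.normSq (U i (Sum.inl c1)) = p i * (x ^ 2 / (κA * dA)) := by
      intro c1
      show Complex.normSq (((Real.sqrt (p i) * x / sqA : ℝ)) : ℂ) = _
      rw [Complex.normSq_ofReal]
      have h1 : Real.sqrt (p i) * x / sqA * (Real.sqrt (p i) * x / sqA)
          = (Real.sqrt (p i) * Real.sqrt (p i)) * (x * x / (sqA * sqA)) := by
        field_simp
      rw [h1, Real.mul_self_sqrt (hp0 i), hsqA2]
      ring
    have e2 : ∀ k, Complex.normSq (U i (Sum.inr k)) = p i * Complex.normSq (a i k) := by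
      intro k
      show Complex.normSq ((((Real.sqrt (p i) : ℝ)) : ℂ) * a i k) = _
      rw [Complex.normSq_mul, Complex.normSq_ofReal, Real.mul_self_sqrt (hp0 i)]
    rw [Finset.sum_congr rfl fun c1 _ => e1 c1, Finset.sum_congr rfl fun k _ => e2 k]
    rw [Finset.sum_const, ← Finset.mul_sum]
    simp only [Finset.card_univ, Fintype.card_fin, nsmul_eq_mul]
    have hbound := hnA i
    have : p i * ∑ k, Complex.normSq (a i k) ≤ p i * ((dA - 1)/(κA * dA)) :=
      mul_le_mul_of_nonneg_left hbound (hp0 i)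
    have hsplit : p i * αA = p i * (x ^ 2 / (κA * dA)) * n + p i * ((dA - 1)/(κA * dA)) := by
      rw [hαA]
      field_simp
      ring
    rw [hsplit]
    have : (n : ℝ) * (p i * (x ^ 2 / (κA * dA))) = p i * (x ^ 2 / (κA * dA)) * n := by ring
    linarith [mul_le_mul_of_nonneg_left hbound (hp0 i)]
  have hVbound : ∀ i, ∑ t, Complex.normSq (V i t) ≤ p i * αB := by
    intro i
    rw [Fintype.sum_sum_type]
    have e1 : ∀ c1 : Fin n, Complex.normSq (V i (Sum.inl c1)) = p i * (y ^ 2 / (κB * dB)) := by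
      intro c1
      show Complex.normSq (((Real.sqrt (p i) * y / sqB : ℝ)) : ℂ) = _
      rw [Complex.normSq_ofReal]
      have h1 : Real.sqrt (p i) * y / sqB * (Real.sqrt (p i) * y / sqB)
          = (Real.sqrt (p i) * Real.sqrt (p i)) * (y * y / (sqB * sqB)) := by
        field_simp
      rw [h1, Real.mul_self_sqrt (hp0 i), hsqB2]
      ring
    have e2 : ∀ k, Complex.normSq (V i (Sum.inr k)) = p i * Complex.normSq (b i k) := by
      intro k
      show Complex.normSq ((((Real.sqrt (p i) : ℝ)) : ℂ) * b i k) = _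
      rw [Complex.normSq_mul, Complex.normSq_ofReal, Real.mul_self_sqrt (hp0 i)]
    rw [Finset.sum_congr rfl fun c1 _ => e1 c1, Finset.sum_congr rfl fun k _ => e2 k]
    rw [Finset.sum_const, ← Finset.mul_sum]
    simp only [Finset.card_univ, Fintype.card_fin, nsmul_eq_mul]
    have hbound := hnB i
    have hsplit : p i * αB = p i * (y ^ 2 / (κB * dB)) * n + p i * ((dB - 1)/(κB * dB)) := by
      rw [hαB]
      field_simp
      ring
    rw [hsplit]
    linarith [mul_le_mul_of_nonneg_left hbound (hp0 i)]
  -- conclude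
  calc traceNorm (extCorrTensor dA dB n κA κB x y r s T)
      ≤ ∑ i, Real.sqrt (∑ t, Complex.normSq (U i t)) * Real.sqrt (∑ t, Complex.normSq (V i t)) :=
        hcore
    _ ≤ ∑ i, Real.sqrt (p i * αA) * Real.sqrt (p i * αB) := by
        refine Finset.sum_le_sum fun i _ => ?_
        exact mul_le_mul (Real.sqrt_le_sqrt (hUbound i)) (Real.sqrt_le_sqrt (hVbound i))
          (Real.sqrt_nonneg _) (Real.sqrt_nonneg _)
    _ = ∑ i, p i * Real.sqrt (αA * αB) := by
        refine Finset.sum_congr rfl fun i _ => ?_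
        rw [Real.sqrt_mul (hp0 i), Real.sqrt_mul (hp0 i), Real.sqrt_mul hαA0]
        have : Real.sqrt (p i) * Real.sqrt (p i) = p i := Real.mul_self_sqrt (hp0 i)
        calc Real.sqrt (p i) * Real.sqrt αA * (Real.sqrt (p i) * Real.sqrt αB)
            = (Real.sqrt (p i) * Real.sqrt (p i)) * (Real.sqrt αA * Real.sqrt αB) := by ring
          _ = p i * (Real.sqrt αA * Real.sqrt αB) := by rw [this]
    _ = Real.sqrt (αA * αB) := by rw [← Finset.sum_mul, hp1, one_mul]
end

section
/- Let ρ be a separable bipartite density matrix on ℂ^{d_A}⊗ℂ^{d_B}. Then for all real numbers x, y ≥ 0 and every positive integer n, the normalized extended correlation tensor satisfies ‖M̂_{x,y}^{(n)}‖_tr ≤ √( (n x² + (d_A² − d_A)/κ_A) · (n y² + (d_B² − d_B)/κ_B) ). -/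
open Matrix BigOperators Kronecker
open scoped ComplexOrder

namespace TraceNormAux

noncomputable def en {ι : Type*} [Fintype ι] (v : ι → ℂ) : EuclideanSpace ℂ ι :=
  (WithLp.equiv 2 (ι → ℂ)).symm v

@[simp] lemma en_apply {ι : Type*} [Fintype ι] (v : ι → ℂ) (i : ι) : en v i = v i := rfl

lemma inner_en {ι : Type*} [Fintype ι] (u v : ι → ℂ) :
    (inner ℂ (en u) (en v) : ℂ) = star u ⬝ᵥ v := by
  simp [en, PiLp.inner_apply, RCLike.inner_apply, dotProduct, mul_comm]

lemma norm_en_sq {ι : Type*} [Fintype ι] (v : ι → ℂ) :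
    ‖en v‖ ^ 2 = ∑ i, ‖v i‖ ^ 2 := by
  rw [EuclideanSpace.norm_eq, Real.sq_sqrt]
  · rfl
  · positivity

lemma dot_self_eq_sum_normsq {ι : Type*} [Fintype ι] (v : ι → ℂ) :
    star v ⬝ᵥ v = ((∑ i, ‖v i‖ ^ 2 : ℝ) : ℂ) := by
  push_cast
  simp only [dotProduct, Pi.star_apply]
  exact Finset.sum_congr rfl fun a _ => by
    rw [show (star (v a)) = (starRingEnd ℂ) (v a) from rfl, RCLike.conj_mul]
    norm_cast

lemma adjoint_dot {m N : Type*} [Fintype m] [Fintype N] (A : Matrix m N ℂ)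
    (u : m → ℂ) (z : N → ℂ) :
    star (Aᴴ *ᵥ u) ⬝ᵥ z = star u ⬝ᵥ (A *ᵥ z) := by
  rw [star_mulVec, conjTranspose_conjTranspose, dotProduct_mulVec]

lemma col_dot {m N : Type*} [Fintype m] [Fintype N] (A : Matrix m N ℂ)
    (u : m → ℂ) (c : N) :
    (Aᴴ *ᵥ u) c = star (fun r => A r c) ⬝ᵥ u := by
  simp [mulVec, dotProduct, conjTranspose_apply, mul_comm]

/-- `Tr(Xᴴ Y)` as a sum over entries. -/
lemma trace_conjTranspose_mul {m n : Type*} [Fintype m] [Fintype n]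
    (X Y : Matrix m n ℂ) :
    (Xᴴ * Y).trace = ∑ p : m, ∑ q : n, star (X p q) * Y p q := by
  simp only [trace, diag_apply, mul_apply, conjTranspose_apply]
  rw [Finset.sum_comm]

lemma purity_le_one {d : Type*} [Fintype d] [DecidableEq d] {ρ : Matrix d d ℂ}
    (hpsd : ρ.PosSemidef) (htr : ρ.trace = 1) :
    ∑ p, ∑ q, ‖ρ p q‖ ^ 2 ≤ 1 := by
  classical
  have hH : ρ.IsHermitian := hpsd.1
  have h1 : (ρᴴ * ρ).trace = ((∑ p, ∑ q, ‖ρ p q‖ ^ 2 : ℝ) : ℂ) := by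
    rw [trace_conjTranspose_mul]
    push_cast
    refine Finset.sum_congr rfl fun p _ => Finset.sum_congr rfl fun q _ => ?_
    rw [show (star (ρ p q)) = (starRingEnd ℂ) (ρ p q) from rfl, RCLike.conj_mul]
    norm_cast
  set lam := hH.eigenvalues with hlam
  set Ub : Matrix d d ℂ := ↑(hH.eigenvectorUnitary) with hUb
  set D : Matrix d d ℂ := diagonal (RCLike.ofReal ∘ lam) with hD
  have hspec : ρ = Ub * D * star Ub := hH.spectral_theorem
  have hstar : star Ub * Ub = 1 := Matrix.UnitaryGroup.star_mul_self hH.eigenvectorUnitary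
  have hsq : ρ * ρ = Ub * (D * D) * star Ub := by
    calc ρ * ρ = (Ub * D * star Ub) * (Ub * D * star Ub) := by rw [← hspec]
      _ = Ub * D * ((star Ub * Ub) * D) * star Ub := by
          simp only [Matrix.mul_assoc]
      _ = Ub * (D * D) * star Ub := by rw [hstar, Matrix.one_mul]; simp only [Matrix.mul_assoc]
  have htrsq : (ρ * ρ).trace = ∑ i, ((lam i : ℂ)) ^ 2 := by
    rw [hsq, trace_mul_cycle, hstar, Matrix.one_mul, hD, diagonal_mul_diagonal, trace_diagonal]
    simp [sq]
  have htrl : (ρ).trace = ∑ i, ((lam i : ℂ)) := by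
    rw [hspec, trace_mul_cycle, hstar, Matrix.one_mul, hD, trace_diagonal]
    rfl
  have hsum1 : ∑ i, lam i = 1 := by
    have : ((∑ i, lam i : ℝ) : ℂ) = 1 := by push_cast; rw [← htrl, htr]
    exact_mod_cast this
  have hlam0 : ∀ i, 0 ≤ lam i := hpsd.eigenvalues_nonneg
  have h2 : ∑ p, ∑ q, ‖ρ p q‖ ^ 2 = ∑ i, lam i ^ 2 := by
    have : ((∑ p, ∑ q, ‖ρ p q‖ ^ 2 : ℝ) : ℂ) = ((∑ i, lam i ^ 2 : ℝ) : ℂ) := by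
      rw [← h1, hH.eq, htrsq]   -- hH.eq? ρᴴ = ρ
      push_cast
      rfl
    exact_mod_cast this
  rw [h2]
  calc ∑ i, lam i ^ 2 ≤ (∑ i, lam i) ^ 2 :=
        Finset.sum_sq_le_sq_sum_of_nonneg fun i _ => hlam0 i
    _ = 1 := by rw [hsum1]; norm_num



/-- vectorization of a matrix -/
def vecM {d : Type*} (X : Matrix d d ℂ) : (d × d) → ℂ := fun pq => X pq.1 pq.2

lemma inner_vecM {d : Type*} [Fintype d] (X Y : Matrix d d ℂ) :
    (inner ℂ (en (vecM X)) (en (vecM Y)) : ℂ) = (Xᴴ * Y).trace := by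
  rw [inner_en, trace_conjTranspose_mul]
  simp only [dotProduct, Pi.star_apply, vecM]
  rw [Fintype.sum_prod_type]

lemma bloch_bound {d : ℕ} (hd : 0 < d) {K : Type*} [Fintype K] [DecidableEq K] {κ : ℝ}
    (hκ : 0 < κ)
    (G : K → Matrix (Fin d) (Fin d) ℂ) (hGtr : ∀ i, (G i).trace = 0)
    (hGorth : ∀ i j, ((G i)ᴴ * G j).trace = if i = j then (κ : ℂ) else 0)
    {ρ : Matrix (Fin d) (Fin d) ℂ} (hpsd : ρ.PosSemidef) (htr : ρ.trace = 1) :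
    ∑ i, ‖(d : ℂ) * (κ : ℂ)⁻¹ * ((G i)ᴴ * ρ).trace‖ ^ 2 ≤ ((d : ℝ) ^ 2 - d) / κ := by
  classical
  have hsκ : Real.sqrt κ * Real.sqrt κ = κ := Real.mul_self_sqrt hκ.le
  have hsκ0 : Real.sqrt κ ≠ 0 := by positivity
  set c : ℂ := ((Real.sqrt κ : ℝ) : ℂ)⁻¹ with hc
  have hcc : c * c = ((κ : ℝ) : ℂ)⁻¹ := by
    rw [hc, ← mul_inv]
    norm_cast
    rw [hsκ]
  have hcconj : (starRingEnd ℂ) c = c := by rw [hc]; simp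
  set v : K → EuclideanSpace ℂ (Fin d × Fin d) := fun i => en (c • vecM (G i)) with hv
  have hsmul : ∀ (z : ℂ) (X : Matrix (Fin d) (Fin d) ℂ), z • vecM X = vecM (z • X) := by
    intro z X; funext pq; simp [vecM]
  have hinner : ∀ (i : K) (Y : Matrix (Fin d) (Fin d) ℂ),
      (inner ℂ (v i) (en (vecM Y)) : ℂ) = c * ((G i)ᴴ * Y).trace := by
    intro i Y
    rw [hv]
    simp only
    rw [hsmul, inner_vecM, conjTranspose_smul, Matrix.smul_mul, trace_smul]
    simp only [smul_eq_mul, RCLike.star_def, hcconj]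
  have horth : Orthonormal ℂ v := by
    rw [orthonormal_iff_ite]
    intro i j
    rw [show v j = en (vecM (c • G j)) from by rw [hv]; simp only [hsmul]]
    rw [show (inner ℂ (v i) (en (vecM (c • G j))) : ℂ) = c * ((G i)ᴴ * (c • G j)).trace from
      hinner i _]
    rw [Matrix.mul_smul, trace_smul, smul_eq_mul, ← mul_assoc, hcc, hGorth i j]
    rcases eq_or_ne i j with rfl | hne
    · have hne0 : ((κ : ℝ) : ℂ) ≠ 0 := by exact_mod_cast ne_of_gt hκ
      simp [inv_mul_cancel₀ hne0]
    · simp [hne]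
  -- the traceless part of ρ
  set Δ : Matrix (Fin d) (Fin d) ℂ := ρ - ((d : ℂ))⁻¹ • 1 with hΔ
  have hdne : ((d : ℂ)) ≠ 0 := by exact_mod_cast Nat.pos_iff_ne_zero.mp hd
  have htrΔ : ∀ i, ((G i)ᴴ * Δ).trace = ((G i)ᴴ * ρ).trace := by
    intro i
    rw [hΔ, Matrix.mul_sub, trace_sub, Matrix.mul_smul, trace_smul, Matrix.mul_one,
      trace_conjTranspose, hGtr i]
    simp
  -- Bessel
  have hbessel : ∑ i, ‖(inner ℂ (v i) (en (vecM Δ)) : ℂ)‖ ^ 2 ≤ ‖en (vecM Δ)‖ ^ 2 := by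
    simpa using horth.sum_inner_products_le (s := Finset.univ) (en (vecM Δ))
  -- compute left side of Bessel
  have hleft : ∀ i, ‖(inner ℂ (v i) (en (vecM Δ)) : ℂ)‖ ^ 2
      = κ⁻¹ * ‖((G i)ᴴ * ρ).trace‖ ^ 2 := by
    intro i
    rw [hinner i Δ, htrΔ i, norm_mul, mul_pow]
    congr 1
    rw [hc]
    rw [norm_inv, Complex.norm_real, Real.norm_of_nonneg (Real.sqrt_nonneg _)]
    rw [← Real.sqrt_inv, Real.sq_sqrt (by positivity)]
  -- compute right side of Bessel
  have hb : ‖en (vecM (((d : ℂ))⁻¹ • (1 : Matrix (Fin d) (Fin d) ℂ)))‖ ^ 2 = (d : ℝ)⁻¹ := by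
    rw [norm_en_sq, Fintype.sum_prod_type]
    have : ∀ p q : Fin d, ‖vecM (((d : ℂ))⁻¹ • (1 : Matrix (Fin d) (Fin d) ℂ)) (p, q)‖ ^ 2
        = if p = q then ((d : ℝ)⁻¹) ^ 2 else 0 := by
      intro p q
      simp only [vecM, Matrix.smul_apply, Matrix.one_apply, smul_eq_mul]
      rcases eq_or_ne p q with rfl | hne
      · simp [Complex.norm_real]
      · simp [hne]
    have hd0 : (0 : ℝ) < d := by exact_mod_cast hd
    simp only [this, Finset.sum_ite_eq, Finset.mem_univ, if_true]
    simp only [Finset.sum_const, Finset.card_univ, Fintype.card_fin, nsmul_eq_mul]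
    rw [show ((d : ℝ)⁻¹) ^ 2 = (d : ℝ)⁻¹ * (d : ℝ)⁻¹ from sq _, ← mul_assoc,
      mul_inv_cancel₀ hd0.ne', one_mul]
  have hab : RCLike.re (inner ℂ (en (vecM ρ))
      (en (vecM (((d : ℂ))⁻¹ • (1 : Matrix (Fin d) (Fin d) ℂ)))) : ℂ) = (d : ℝ)⁻¹ := by
    rw [inner_vecM, Matrix.mul_smul, trace_smul, trace_conjTranspose_mul]
    have : ∑ p, ∑ q, star (ρ p q) * (1 : Matrix (Fin d) (Fin d) ℂ) p q
        = star ρ.trace := by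
      rw [trace]
      push_cast
      rw [star_sum]
      refine Finset.sum_congr rfl fun p _ => ?_
      rw [Finset.sum_eq_single p]
      · simp [Matrix.one_apply, diag]
      · intro q _ hq; simp [Matrix.one_apply, Ne.symm hq]
      · intro h; exact absurd (Finset.mem_univ p) h
    rw [this, htr]
    simp
  have hxsub : en (vecM Δ) = en (vecM ρ) - en (vecM (((d : ℂ))⁻¹ • 1)) := by
    apply PiLp.ext
    intro pq
    simp [hΔ, vecM, en, Matrix.sub_apply]
  have hnormΔ : ‖en (vecM Δ)‖ ^ 2 ≤ 1 - (d : ℝ)⁻¹ := by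
    rw [hxsub, @norm_sub_sq ℂ _ _ _ _ (en (vecM ρ)) _, hab, hb]
    have hpur : ‖en (vecM ρ)‖ ^ 2 ≤ 1 := by
      rw [norm_en_sq, Fintype.sum_prod_type]
      exact purity_le_one hpsd htr
    linarith
  -- assemble
  have hmain : ∑ i, κ⁻¹ * ‖((G i)ᴴ * ρ).trace‖ ^ 2 ≤ 1 - (d : ℝ)⁻¹ := by
    calc ∑ i, κ⁻¹ * ‖((G i)ᴴ * ρ).trace‖ ^ 2
        = ∑ i, ‖(inner ℂ (v i) (en (vecM Δ)) : ℂ)‖ ^ 2 := by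
          exact Finset.sum_congr rfl fun i _ => (hleft i).symm
      _ ≤ ‖en (vecM Δ)‖ ^ 2 := hbessel
      _ ≤ 1 - (d : ℝ)⁻¹ := hnormΔ
  have hnorm : ∀ i, ‖(d : ℂ) * (κ : ℂ)⁻¹ * ((G i)ᴴ * ρ).trace‖ ^ 2
      = (d : ℝ) ^ 2 * κ⁻¹ * (κ⁻¹ * ‖((G i)ᴴ * ρ).trace‖ ^ 2) := by
    intro i
    rw [norm_mul, norm_mul, mul_pow, mul_pow, norm_inv]
    have h1 : ‖((d : ℕ) : ℂ)‖ = (d : ℝ) := by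
      rw [Complex.norm_natCast]
    have h2 : ‖((κ : ℝ) : ℂ)‖ = κ := by
      rw [Complex.norm_real, Real.norm_of_nonneg hκ.le]
    rw [h1, h2]
    ring
  calc ∑ i, ‖(d : ℂ) * (κ : ℂ)⁻¹ * ((G i)ᴴ * ρ).trace‖ ^ 2
      = (d : ℝ) ^ 2 * κ⁻¹ * ∑ i, (κ⁻¹ * ‖((G i)ᴴ * ρ).trace‖ ^ 2) := by
        rw [Finset.mul_sum]
        exact Finset.sum_congr rfl fun i _ => hnorm i
    _ ≤ (d : ℝ) ^ 2 * κ⁻¹ * (1 - (d : ℝ)⁻¹) := by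
        apply mul_le_mul_of_nonneg_left hmain
        positivity
    _ = ((d : ℝ) ^ 2 - d) / κ := by
        have hd0 : (0 : ℝ) < d := by exact_mod_cast hd
        field_simp

lemma kronecker_conjTranspose {l m n p : Type*} (A : Matrix l m ℂ) (B : Matrix n p ℂ) :
    (A ⊗ₖ B)ᴴ = Aᴴ ⊗ₖ Bᴴ := by
  ext ⟨i, j⟩ ⟨k, l⟩
  simp [conjTranspose_apply, mul_comm]

lemma trace_pair {dA dB : ℕ} (P X : Matrix (Fin dA) (Fin dA) ℂ)
    (Q Y : Matrix (Fin dB) (Fin dB) ℂ) :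
    ((P ⊗ₖ Q)ᴴ * (X ⊗ₖ Y)).trace = (Pᴴ * X).trace * (Qᴴ * Y).trace := by
  rw [kronecker_conjTranspose, ← Matrix.mul_kronecker_mul, Matrix.trace_kronecker]

lemma trace_blochExpansion {dA dB : ℕ} {KA KB : Type*} [Fintype KA] [Fintype KB]
    (GA : KA → Matrix (Fin dA) (Fin dA) ℂ) (GB : KB → Matrix (Fin dB) (Fin dB) ℂ)
    (r : KA → ℂ) (s : KB → ℂ) (T : Matrix KA KB ℂ)
    (P : Matrix (Fin dA) (Fin dA) ℂ) (Q : Matrix (Fin dB) (Fin dB) ℂ) :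
    ((P ⊗ₖ Q)ᴴ * ((1 : Matrix (Fin dA × Fin dB) (Fin dA × Fin dB) ℂ)
        + ∑ i, r i • (GA i ⊗ₖ (1 : Matrix (Fin dB) (Fin dB) ℂ))
        + ∑ j, s j • ((1 : Matrix (Fin dA) (Fin dA) ℂ) ⊗ₖ GB j)
        + ∑ i, ∑ j, T i j • (GA i ⊗ₖ GB j))).trace
      = (Pᴴ * 1).trace * (Qᴴ * 1).trace
        + (∑ i, r i * ((Pᴴ * GA i).trace * (Qᴴ * 1).trace))
        + (∑ j, s j * ((Pᴴ * 1).trace * (Qᴴ * GB j).trace))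
        + ∑ i, ∑ j, T i j * ((Pᴴ * GA i).trace * (Qᴴ * GB j).trace) := by
  rw [show (1 : Matrix (Fin dA × Fin dB) (Fin dA × Fin dB) ℂ)
      = (1 : Matrix (Fin dA) (Fin dA) ℂ) ⊗ₖ (1 : Matrix (Fin dB) (Fin dB) ℂ) from
    (Matrix.one_kronecker_one).symm]
  simp only [Matrix.mul_add, Matrix.trace_add, Matrix.mul_sum, Matrix.trace_sum,
    Matrix.mul_smul, Matrix.trace_smul, trace_pair, smul_eq_mul]

end TraceNormAux


open TraceNormAux in
lemma traceNorm_mul_conjTranspose_le {m k N : Type*} [Fintype m] [Fintype k] [DecidableEq k]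
    [Fintype N] (A : Matrix m N ℂ) (B : Matrix k N ℂ) :
    traceNorm (A * Bᴴ) ≤
      Real.sqrt (∑ p, ∑ c, ‖A p c‖ ^ 2) * Real.sqrt (∑ p, ∑ c, ‖B p c‖ ^ 2) := by
  classical
  set M : Matrix m k ℂ := A * Bᴴ with hMdef
  have hH : (Mᴴ * M).IsHermitian := Matrix.isHermitian_conjTranspose_mul_self M
  set lam : k → ℝ := hH.eigenvalues with hlamdef
  have hlam0 : ∀ i, 0 ≤ lam i := (Matrix.posSemidef_conjTranspose_mul_self M).eigenvalues_nonneg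
  set wf : k → (k → ℂ) := fun i => (WithLp.equiv 2 _) (hH.eigenvectorBasis i) with hwf
  have heig : ∀ i, (Mᴴ * M) *ᵥ wf i = fun a => (lam i : ℂ) * wf i a := by
    intro i
    have h := hH.mulVec_eigenvectorBasis i
    funext a
    have h2 := congrFun h a
    simpa [Complex.real_smul, hwf, hlamdef] using h2
  have F0 : ∀ v v' : k → ℂ, star (M *ᵥ v) ⬝ᵥ (M *ᵥ v') = star v ⬝ᵥ ((Mᴴ * M) *ᵥ v') := by
    intro v v'
    rw [star_mulVec, dotProduct_mulVec, vecMul_vecMul, dotProduct_mulVec]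
  have hwo : ∀ i j, star (wf i) ⬝ᵥ (wf j) = if i = j then (1:ℂ) else 0 := by
    intro i j
    have horth := hH.eigenvectorBasis.orthonormal
    rw [orthonormal_iff_ite] at horth
    have h2 := horth i j
    rw [show (inner ℂ (hH.eigenvectorBasis i) (hH.eigenvectorBasis j) : ℂ)
        = star (wf i) ⬝ᵥ (wf j) from by
      simp [PiLp.inner_apply, RCLike.inner_apply, dotProduct, hwf, mul_comm]] at h2
    exact h2
  have F1 : ∀ i j, star (M *ᵥ wf i) ⬝ᵥ (M *ᵥ wf j)
      = (lam j : ℂ) * (if i = j then 1 else 0) := by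
    intro i j
    rw [F0, heig j]
    rw [← hwo i j]
    simp [dotProduct, Finset.mul_sum]
    congr 1; funext a; ring
  have F1' : ∀ i, (∑ a, ‖(M *ᵥ wf i) a‖ ^ 2) = lam i := by
    intro i
    have h := F1 i i
    simp only [if_pos rfl, mul_one, eq_self_iff_true, if_true] at h
    rw [dot_self_eq_sum_normsq] at h
    exact_mod_cast h
  -- the singular values
  set sig : k → ℝ := fun i => Real.sqrt (lam i) with hsig
  have hsig0 : ∀ i, 0 ≤ sig i := fun i => Real.sqrt_nonneg _
  have htrace : traceNorm M = ∑ i, sig i := rfl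
  set S : Finset k := Finset.univ.filter (fun i => lam i ≠ 0) with hS
  have hsum : ∑ i, sig i = ∑ i ∈ S, sig i := by
    symm
    apply Finset.sum_subset (Finset.subset_univ S)
    intro x _ hx
    have hx0 : lam x = 0 := by
      by_contra hne
      exact hx (by simp [hS, hne])
    simp [hsig, hx0]
  -- vectors
  set u : k → (m → ℂ) := fun i => ((sig i : ℂ))⁻¹ • (M *ᵥ wf i) with hu
  have hudot : ∀ i j, star (u i) ⬝ᵥ (u j)
      = ((sig i : ℂ))⁻¹ * ((sig j : ℂ))⁻¹ * ((lam j : ℂ) * if i = j then 1 else 0) := by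
    intro i j
    rw [hu]
    simp only [star_smul, smul_dotProduct, dotProduct_smul, star_inv₀, RCLike.star_def,
      Complex.conj_ofReal, smul_eq_mul]
    rw [F1 i j]
    ring
  have huo : ∀ i ∈ S, ∀ j ∈ S, star (u i) ⬝ᵥ (u j) = if i = j then (1:ℂ) else 0 := by
    intro i hi j hj
    rw [hudot]
    rcases eq_or_ne i j with rfl | hne
    · simp only [if_pos rfl, mul_one]
      have hne0 : lam i ≠ 0 := (Finset.mem_filter.mp hi).2
      have hs : sig i * sig i = lam i := Real.mul_self_sqrt (hlam0 i)
      have hsne : (sig i : ℝ) ≠ 0 := fun h0 => hne0 (by rw [← hs, h0, mul_zero])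
      have hsC : ((sig i : ℂ)) * (sig i : ℂ) = ((lam i : ℂ)) := by exact_mod_cast hs
      have hsneC : ((sig i : ℂ)) ≠ 0 := by exact_mod_cast hsne
      rw [← hsC]
      field_simp
    · simp [hne]
  -- per-index bound
  have key : ∀ i ∈ S, sig i ≤ ‖en (Aᴴ *ᵥ u i)‖ * ‖en (Bᴴ *ᵥ wf i)‖ := by
    intro i hi
    have hval : star (u i) ⬝ᵥ (M *ᵥ wf i) = (sig i : ℂ) := by
      rw [hu]
      simp only [star_smul, smul_dotProduct, star_inv₀, RCLike.star_def,
        Complex.conj_ofReal, smul_eq_mul]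
      rw [F1 i i]
      simp only [if_pos rfl, mul_one]
      have hne0 : lam i ≠ 0 := (Finset.mem_filter.mp hi).2
      have hs : (sig i : ℝ) * sig i = lam i := Real.mul_self_sqrt (hlam0 i)
      have hsne : (sig i : ℝ) ≠ 0 := fun h0 => hne0 (by rw [← hs, h0, mul_zero])
      field_simp
      rw [← hs]; push_cast; ring
    have hreform : star (u i) ⬝ᵥ (M *ᵥ wf i) = star (Aᴴ *ᵥ u i) ⬝ᵥ (Bᴴ *ᵥ wf i) := by
      rw [adjoint_dot]
      congr 1
      rw [hMdef, ← mulVec_mulVec]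
    have : (sig i : ℂ) = inner ℂ (en (Aᴴ *ᵥ u i)) (en (Bᴴ *ᵥ wf i)) := by
      rw [inner_en, ← hreform, hval]
    calc sig i = ‖(sig i : ℂ)‖ := by
            rw [Complex.norm_real, Real.norm_of_nonneg (hsig0 i)]
      _ = ‖(inner ℂ (en (Aᴴ *ᵥ u i)) (en (Bᴴ *ᵥ wf i)) : ℂ)‖ := by rw [← this]
      _ ≤ _ := norm_inner_le_norm _ _
  -- Bessel for A
  have besselA : ∑ i ∈ S, ‖en (Aᴴ *ᵥ u i)‖ ^ 2 ≤ ∑ p, ∑ c, ‖A p c‖ ^ 2 := by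
    have horth : Orthonormal ℂ (fun i : {x // x ∈ S} => en (u i.1)) := by
      rw [orthonormal_iff_ite]
      intro i j
      rw [inner_en, huo i.1 i.2 j.1 j.2]
      rcases eq_or_ne i j with rfl | hne
      · simp
      · simp [hne, Subtype.coe_ne_coe.mpr hne]
    calc ∑ i ∈ S, ‖en (Aᴴ *ᵥ u i)‖ ^ 2
        = ∑ i ∈ S, ∑ c, ‖(Aᴴ *ᵥ u i) c‖ ^ 2 := by
          exact Finset.sum_congr rfl fun i _ => norm_en_sq _
      _ = ∑ c, ∑ i ∈ S, ‖(inner ℂ (en (u i)) (en (fun r => A r c)) : ℂ)‖ ^ 2 := by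
          rw [Finset.sum_comm]
          refine Finset.sum_congr rfl fun i _ => Finset.sum_congr rfl fun c _ => ?_
          rw [col_dot, ← inner_en, ← norm_inner_symm]
      _ ≤ ∑ c, ‖en (fun r => A r c)‖ ^ 2 := by
          refine Finset.sum_le_sum fun c _ => ?_
          rw [← Finset.sum_coe_sort S (fun i => ‖(inner ℂ (en (u i)) (en (fun r => A r c)) : ℂ)‖ ^ 2)]
          exact horth.sum_inner_products_le _
      _ = ∑ c, ∑ p, ‖A p c‖ ^ 2 := Finset.sum_congr rfl fun c _ => norm_en_sq _
      _ = ∑ p, ∑ c, ‖A p c‖ ^ 2 := Finset.sum_comm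
  -- Bessel for B
  have besselB : ∑ i ∈ S, ‖en (Bᴴ *ᵥ wf i)‖ ^ 2 ≤ ∑ p, ∑ c, ‖B p c‖ ^ 2 := by
    have horth : Orthonormal ℂ (fun i : {x // x ∈ S} => en (wf i.1)) := by
      rw [orthonormal_iff_ite]
      intro i j
      rw [inner_en, hwo i.1 j.1]
      rcases eq_or_ne i j with rfl | hne
      · simp
      · simp [hne, Subtype.coe_ne_coe.mpr hne]
    calc ∑ i ∈ S, ‖en (Bᴴ *ᵥ wf i)‖ ^ 2
        = ∑ i ∈ S, ∑ c, ‖(Bᴴ *ᵥ wf i) c‖ ^ 2 := Finset.sum_congr rfl fun i _ => norm_en_sq _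
      _ = ∑ c, ∑ i ∈ S, ‖(inner ℂ (en (wf i)) (en (fun r => B r c)) : ℂ)‖ ^ 2 := by
          rw [Finset.sum_comm]
          refine Finset.sum_congr rfl fun i _ => Finset.sum_congr rfl fun c _ => ?_
          rw [col_dot, ← inner_en, ← norm_inner_symm]
      _ ≤ ∑ c, ‖en (fun r => B r c)‖ ^ 2 := by
          refine Finset.sum_le_sum fun c _ => ?_
          rw [← Finset.sum_coe_sort S (fun i => ‖(inner ℂ (en (wf i)) (en (fun r => B r c)) : ℂ)‖ ^ 2)]
          exact horth.sum_inner_products_le _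
      _ = ∑ c, ∑ p, ‖B p c‖ ^ 2 := Finset.sum_congr rfl fun c _ => norm_en_sq _
      _ = ∑ p, ∑ c, ‖B p c‖ ^ 2 := Finset.sum_comm
  -- assemble
  rw [htrace, hsum]
  calc ∑ i ∈ S, sig i
      ≤ ∑ i ∈ S, ‖en (Aᴴ *ᵥ u i)‖ * ‖en (Bᴴ *ᵥ wf i)‖ := Finset.sum_le_sum key
    _ ≤ Real.sqrt (∑ i ∈ S, ‖en (Aᴴ *ᵥ u i)‖ ^ 2) * Real.sqrt (∑ i ∈ S, ‖en (Bᴴ *ᵥ wf i)‖ ^ 2) :=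
        Real.sum_mul_le_sqrt_mul_sqrt _ _ _
    _ ≤ Real.sqrt (∑ p, ∑ c, ‖A p c‖ ^ 2) * Real.sqrt (∑ p, ∑ c, ‖B p c‖ ^ 2) := by
        apply mul_le_mul (Real.sqrt_le_sqrt besselA) (Real.sqrt_le_sqrt besselB)
          (Real.sqrt_nonneg _) (Real.sqrt_nonneg _)

/-- The normalized extended correlation tensor `M̂_{x,y}^{(n)}` built from the normalized
Bloch data `r̂, ŝ, T̂`. -/
noncomputable def normExtCorrTensor (dA dB n : ℕ) (x y : ℝ)
    (r : Fin (dA ^ 2 - 1) → ℂ) (s : Fin (dB ^ 2 - 1) → ℂ)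
    (T : Matrix (Fin (dA ^ 2 - 1)) (Fin (dB ^ 2 - 1)) ℂ) :
    Matrix (Fin n ⊕ Fin (dA ^ 2 - 1)) (Fin n ⊕ Fin (dB ^ 2 - 1)) ℂ :=
  Matrix.fromBlocks
    (Matrix.of fun _ _ => ((x * y : ℝ) : ℂ))
    (Matrix.of fun _ j => ((x : ℝ) : ℂ) * s j)
    (Matrix.of fun i _ => ((y : ℝ) : ℂ) * r i)
    T

set_option maxHeartbeats 2000000 in
open TraceNormAux in
/-- **Proposition**: for a separable bipartite density matrix the trace norm of the normalized
extended correlation tensor is bounded by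
`√((n x² + (d_A² − d_A)/κ_A)(n y² + (d_B² − d_B)/κ_B))`. -/
theorem traceNorm_normExtCorrTensor_le_of_separable
    (dA dB : ℕ) (hdA : 2 ≤ dA) (hdB : 2 ≤ dB)
    (κA κB : ℝ) (hκA : 1 ≤ κA) (hκB : 1 ≤ κB)
    (GA : Fin (dA ^ 2 - 1) → Matrix (Fin dA) (Fin dA) ℂ)
    (GB : Fin (dB ^ 2 - 1) → Matrix (Fin dB) (Fin dB) ℂ)
    (hGAtr : ∀ i, (GA i).trace = 0)
    (hGBtr : ∀ j, (GB j).trace = 0)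
    (hGAorth : ∀ i j, ((GA i)ᴴ * GA j).trace = if i = j then (κA : ℂ) else 0)
    (hGBorth : ∀ i j, ((GB i)ᴴ * GB j).trace = if i = j then (κB : ℂ) else 0)
    (hGAspan : ∀ X : Matrix (Fin dA) (Fin dA) ℂ, X.trace = 0 →
      X ∈ Submodule.span ℂ (Set.range GA))
    (hGBspan : ∀ X : Matrix (Fin dB) (Fin dB) ℂ, X.trace = 0 →
      X ∈ Submodule.span ℂ (Set.range GB))
    (ρ : Matrix (Fin dA × Fin dB) (Fin dA × Fin dB) ℂ)
    (hρ : IsDensityMatrix ρ)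
    (hsep : IsSeparableState dA dB ρ)
    (r : Fin (dA ^ 2 - 1) → ℂ) (s : Fin (dB ^ 2 - 1) → ℂ)
    (T : Matrix (Fin (dA ^ 2 - 1)) (Fin (dB ^ 2 - 1)) ℂ)
    (hexp : ρ = ((dA * dB : ℂ))⁻¹ •
      ((1 : Matrix (Fin dA × Fin dB) (Fin dA × Fin dB) ℂ)
        + ∑ i, r i • (GA i ⊗ₖ (1 : Matrix (Fin dB) (Fin dB) ℂ))
        + ∑ j, s j • ((1 : Matrix (Fin dA) (Fin dA) ℂ) ⊗ₖ GB j)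
        + ∑ i, ∑ j, T i j • (GA i ⊗ₖ GB j)))
    (x y : ℝ) (hx : 0 ≤ x) (hy : 0 ≤ y) (n : ℕ) (hn : 0 < n) :
    traceNorm (normExtCorrTensor dA dB n x y r s T) ≤
      Real.sqrt ((n * x ^ 2 + ((dA : ℝ) ^ 2 - dA) / κA) *
        (n * y ^ 2 + ((dB : ℝ) ^ 2 - dB) / κB)) := by
  classical
  obtain ⟨N, p, ρA, ρB, hp0, hp1, hρA, hρB, hρeq⟩ := hsep
  have hdA0 : 0 < dA := by omega
  have hdB0 : 0 < dB := by omega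
  have hκA0 : (0 : ℝ) < κA := lt_of_lt_of_le one_pos hκA
  have hκB0 : (0 : ℝ) < κB := lt_of_lt_of_le one_pos hκB
  have hdAne : ((dA : ℕ) : ℂ) ≠ 0 := by exact_mod_cast hdA0.ne'
  have hdBne : ((dB : ℕ) : ℂ) ≠ 0 := by exact_mod_cast hdB0.ne'
  have hκAne : ((κA : ℝ) : ℂ) ≠ 0 := by exact_mod_cast hκA0.ne'
  have hκBne : ((κB : ℝ) : ℂ) ≠ 0 := by exact_mod_cast hκB0.ne'
  have htrA1 : ∀ k, (ρA k).trace = 1 := fun k => (hρA k).2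
  have htrB1 : ∀ k, (ρB k).trace = 1 := fun k => (hρB k).2
  set a : Fin N → Fin (dA ^ 2 - 1) → ℂ :=
    fun k i => (dA : ℂ) * ((κA : ℝ) : ℂ)⁻¹ * ((GA i)ᴴ * ρA k).trace with ha
  set b : Fin N → Fin (dB ^ 2 - 1) → ℂ :=
    fun k j => (dB : ℂ) * ((κB : ℝ) : ℂ)⁻¹ * ((GB j)ᴴ * ρB k).trace with hb
  have hmaster : (∑ k, (p k : ℂ) • (ρA k ⊗ₖ ρB k))
      = ((dA * dB : ℂ))⁻¹ • ((1 : Matrix (Fin dA × Fin dB) (Fin dA × Fin dB) ℂ)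
        + ∑ i, r i • (GA i ⊗ₖ (1 : Matrix (Fin dB) (Fin dB) ℂ))
        + ∑ j, s j • ((1 : Matrix (Fin dA) (Fin dA) ℂ) ⊗ₖ GB j)
        + ∑ i, ∑ j, T i j • (GA i ⊗ₖ GB j)) := by
    rw [← hρeq]; exact hexp
  have happ : ∀ (P : Matrix (Fin dA) (Fin dA) ℂ) (Q : Matrix (Fin dB) (Fin dB) ℂ),
      ∑ k, (p k : ℂ) * ((Pᴴ * ρA k).trace * (Qᴴ * ρB k).trace)
      = ((dA * dB : ℂ))⁻¹ *
        ((Pᴴ * 1).trace * (Qᴴ * 1).trace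
        + (∑ i, r i * ((Pᴴ * GA i).trace * (Qᴴ * 1).trace))
        + (∑ j, s j * ((Pᴴ * 1).trace * (Qᴴ * GB j).trace))
        + ∑ i, ∑ j, T i j * ((Pᴴ * GA i).trace * (Qᴴ * GB j).trace)) := by
    intro P Q
    have h := congrArg (fun X => (((P ⊗ₖ Q)ᴴ) * X).trace) hmaster
    simp only at h
    rw [Matrix.mul_sum] at h
    simp only [Matrix.mul_smul, Matrix.trace_sum, Matrix.trace_smul, smul_eq_mul,
      trace_pair] at h
    rw [trace_blochExpansion GA GB r s T P Q] at h
    exact h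
  -- T extraction
  have hTid : ∀ i j, ∑ k, (p k : ℂ) * (((GA i)ᴴ * ρA k).trace * ((GB j)ᴴ * ρB k).trace)
      = ((dA * dB : ℂ))⁻¹ * (T i j * ((κA : ℂ) * (κB : ℂ))) := by
    intro i j
    have h := happ (GA i) (GB j)
    simp only [Matrix.mul_one, Matrix.trace_conjTranspose, hGAtr, hGBtr, star_zero,
      zero_mul, mul_zero, Finset.sum_const_zero, add_zero, zero_add,
      hGAorth, hGBorth, mul_ite, ite_mul, Finset.sum_ite_eq, Finset.mem_univ,
      if_true] at h
    rw [h]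
  have hrid : ∀ i, ∑ k, (p k : ℂ) * ((GA i)ᴴ * ρA k).trace
      = ((dA * dB : ℂ))⁻¹ * (r i * ((κA : ℂ) * (dB : ℂ))) := by
    intro i
    have h := happ (GA i) 1
    simp only [Matrix.conjTranspose_one, Matrix.one_mul, Matrix.mul_one, htrB1,
      Matrix.trace_conjTranspose, hGAtr, hGBtr, star_zero, zero_mul, mul_zero, mul_one,
      Finset.sum_const_zero, add_zero, zero_add, hGAorth, Matrix.trace_one,
      mul_ite, ite_mul, Finset.sum_ite_eq, Finset.mem_univ, if_true] at h
    rw [h]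
    simp only [Fintype.card_fin]
  have hsid : ∀ j, ∑ k, (p k : ℂ) * ((GB j)ᴴ * ρB k).trace
      = ((dA * dB : ℂ))⁻¹ * (s j * ((κB : ℂ) * (dA : ℂ))) := by
    intro j
    have h := happ 1 (GB j)
    simp only [Matrix.conjTranspose_one, Matrix.one_mul, Matrix.mul_one, htrA1,
      Matrix.trace_conjTranspose, hGAtr, hGBtr, star_zero, zero_mul, mul_zero, mul_one,
      one_mul, Finset.sum_const_zero, add_zero, zero_add, hGBorth, Matrix.trace_one,
      mul_ite, ite_mul, Finset.sum_ite_eq, Finset.mem_univ, if_true] at h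
    rw [h]
    simp only [Fintype.card_fin]
    ring
  -- the convex decompositions
  have hr : ∀ i, r i = ∑ k, (p k : ℂ) * a k i := by
    intro i
    have h1 : ∑ k, (p k : ℂ) * a k i
        = (dA : ℂ) * ((κA : ℝ) : ℂ)⁻¹ * ∑ k, (p k : ℂ) * ((GA i)ᴴ * ρA k).trace := by
      rw [Finset.mul_sum]
      exact Finset.sum_congr rfl fun k _ => by rw [ha]; ring
    rw [h1, hrid i]
    push_cast
    field_simp
  have hs : ∀ j, s j = ∑ k, (p k : ℂ) * b k j := by
    intro j
    have h1 : ∑ k, (p k : ℂ) * b k j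
        = (dB : ℂ) * ((κB : ℝ) : ℂ)⁻¹ * ∑ k, (p k : ℂ) * ((GB j)ᴴ * ρB k).trace := by
      rw [Finset.mul_sum]
      exact Finset.sum_congr rfl fun k _ => by rw [hb]; ring
    rw [h1, hsid j]
    push_cast
    field_simp
  have hT : ∀ i j, T i j = ∑ k, (p k : ℂ) * (a k i * b k j) := by
    intro i j
    have h1 : ∑ k, (p k : ℂ) * (a k i * b k j)
        = ((dA : ℂ) * ((κA : ℝ) : ℂ)⁻¹) * ((dB : ℂ) * ((κB : ℝ) : ℂ)⁻¹)
          * ∑ k, (p k : ℂ) * (((GA i)ᴴ * ρA k).trace * ((GB j)ᴴ * ρB k).trace) := by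
      rw [Finset.mul_sum]
      exact Finset.sum_congr rfl fun k _ => by rw [ha, hb]; ring
    rw [h1, hTid i j]
    push_cast
    field_simp
  -- factorization
  set Amat : Matrix (Fin n ⊕ Fin (dA ^ 2 - 1)) (Fin N) ℂ :=
    Matrix.of fun iu k => ((Real.sqrt (p k) : ℝ) : ℂ)
      * Sum.elim (fun _ : Fin n => ((x : ℝ) : ℂ)) (a k) iu with hAm
  set Bmat : Matrix (Fin n ⊕ Fin (dB ^ 2 - 1)) (Fin N) ℂ :=
    Matrix.of fun ju k => ((Real.sqrt (p k) : ℝ) : ℂ)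
      * Sum.elim (fun _ : Fin n => ((y : ℝ) : ℂ)) (fun j => star (b k j)) ju with hBm
  have hps : ∀ k, ((Real.sqrt (p k) : ℝ) : ℂ) * ((Real.sqrt (p k) : ℝ) : ℂ)
      = ((p k : ℝ) : ℂ) := fun k => by
    norm_cast
    exact Real.mul_self_sqrt (hp0 k)
  have hstarR : ∀ t : ℝ, star ((t : ℝ) : ℂ) = ((t : ℝ) : ℂ) := fun t => by
    rw [RCLike.star_def, Complex.conj_ofReal]
  have hp1C : ∑ k, ((p k : ℝ) : ℂ) = 1 := by
    have := congrArg (fun t : ℝ => (t : ℂ)) hp1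
    push_cast at this
    simpa using this
  have hfact : normExtCorrTensor dA dB n x y r s T = Amat * Bmatᴴ := by
    ext iu ju
    rw [Matrix.mul_apply]
    simp only [Matrix.conjTranspose_apply, hAm, hBm, Matrix.of_apply]
    cases iu with
    | inl i =>
      cases ju with
      | inl j =>
        have hterm : ∀ k, ((Real.sqrt (p k) : ℝ) : ℂ)
              * Sum.elim (fun _ : Fin n => ((x : ℝ) : ℂ)) (a k) (Sum.inl i)
              * star (((Real.sqrt (p k) : ℝ) : ℂ)
                * Sum.elim (fun _ : Fin n => ((y : ℝ) : ℂ)) (fun j => star (b k j)) (Sum.inl j))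
            = ((p k : ℝ) : ℂ) * ((x : ℂ) * (y : ℂ)) := by
          intro k
          simp only [Sum.elim_inl, star_mul', hstarR]
          rw [← hps k]
          ring
        simp only [hterm, ← Finset.sum_mul, hp1C, one_mul]
        simp only [normExtCorrTensor, Matrix.fromBlocks, Matrix.of_apply, Sum.elim_inl,
          Matrix.fromBlocks_apply₁₁]
        push_cast
        ring
      | inr j =>
        have hterm : ∀ k, ((Real.sqrt (p k) : ℝ) : ℂ)
              * Sum.elim (fun _ : Fin n => ((x : ℝ) : ℂ)) (a k) (Sum.inl i)
              * star (((Real.sqrt (p k) : ℝ) : ℂ)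
                * Sum.elim (fun _ : Fin n => ((y : ℝ) : ℂ)) (fun j' => star (b k j')) (Sum.inr j))
            = (x : ℂ) * ((p k : ℝ) : ℂ) * b k j := by
          intro k
          simp only [Sum.elim_inl, Sum.elim_inr, star_mul', hstarR, star_star]
          rw [← hps k]
          ring
        simp only [hterm]
        rw [show ∑ k, (x : ℂ) * ((p k : ℝ) : ℂ) * b k j
            = (x : ℂ) * ∑ k, ((p k : ℝ) : ℂ) * b k j from by
          rw [Finset.mul_sum]; exact Finset.sum_congr rfl fun k _ => by ring]
        rw [← hs j]
        simp [normExtCorrTensor, Matrix.fromBlocks]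
    | inr i =>
      cases ju with
      | inl j =>
        have hterm : ∀ k, ((Real.sqrt (p k) : ℝ) : ℂ)
              * Sum.elim (fun _ : Fin n => ((x : ℝ) : ℂ)) (a k) (Sum.inr i)
              * star (((Real.sqrt (p k) : ℝ) : ℂ)
                * Sum.elim (fun _ : Fin n => ((y : ℝ) : ℂ)) (fun j' => star (b k j')) (Sum.inl j))
            = (y : ℂ) * ((p k : ℝ) : ℂ) * a k i := by
          intro k
          simp only [Sum.elim_inl, Sum.elim_inr, star_mul', hstarR]
          rw [← hps k]
          ring
        simp only [hterm]
        rw [show ∑ k, (y : ℂ) * ((p k : ℝ) : ℂ) * a k i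
            = (y : ℂ) * ∑ k, ((p k : ℝ) : ℂ) * a k i from by
          rw [Finset.mul_sum]; exact Finset.sum_congr rfl fun k _ => by ring]
        rw [← hr i]
        simp [normExtCorrTensor, Matrix.fromBlocks]
      | inr j =>
        have hterm : ∀ k, ((Real.sqrt (p k) : ℝ) : ℂ)
              * Sum.elim (fun _ : Fin n => ((x : ℝ) : ℂ)) (a k) (Sum.inr i)
              * star (((Real.sqrt (p k) : ℝ) : ℂ)
                * Sum.elim (fun _ : Fin n => ((y : ℝ) : ℂ)) (fun j' => star (b k j')) (Sum.inr j))
            = ((p k : ℝ) : ℂ) * (a k i * b k j) := by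
          intro k
          simp only [Sum.elim_inr, star_mul', hstarR, star_star]
          rw [← hps k]
          ring
        simp only [hterm]
        rw [← hT i j]
        simp [normExtCorrTensor, Matrix.fromBlocks]
  -- Frobenius norms
  have hnormsq : ∀ (k : Fin N) (z : ℂ), ‖((Real.sqrt (p k) : ℝ) : ℂ) * z‖ ^ 2
      = p k * ‖z‖ ^ 2 := by
    intro k z
    rw [norm_mul, mul_pow, Complex.norm_real, Real.norm_of_nonneg (Real.sqrt_nonneg _),
      Real.sq_sqrt (hp0 k)]
  have hblochA : ∀ k, ∑ i, ‖a k i‖ ^ 2 ≤ ((dA : ℝ) ^ 2 - dA) / κA := by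
    intro k
    rw [ha]
    exact bloch_bound hdA0 hκA0 GA hGAtr hGAorth (hρA k).1 (hρA k).2
  have hblochB : ∀ k, ∑ j, ‖b k j‖ ^ 2 ≤ ((dB : ℝ) ^ 2 - dB) / κB := by
    intro k
    rw [hb]
    exact bloch_bound hdB0 hκB0 GB hGBtr hGBorth (hρB k).1 (hρB k).2
  have hFA : ∑ iu, ∑ k, ‖Amat iu k‖ ^ 2 ≤ (n : ℝ) * x ^ 2 + ((dA : ℝ) ^ 2 - dA) / κA := by
    rw [Finset.sum_comm]
    calc ∑ k, ∑ iu, ‖Amat iu k‖ ^ 2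
        = ∑ k, (p k * ((n : ℝ) * x ^ 2 + ∑ i, ‖a k i‖ ^ 2)) := by
          refine Finset.sum_congr rfl fun k _ => ?_
          rw [Fintype.sum_sum_type]
          simp only [hAm, Matrix.of_apply, Sum.elim_inl, Sum.elim_inr, hnormsq]
          rw [Finset.sum_const, Finset.card_univ, Fintype.card_fin, ← Finset.mul_sum]
          have : ‖((x : ℝ) : ℂ)‖ ^ 2 = x ^ 2 := by
            rw [Complex.norm_real, Real.norm_of_nonneg hx]
          rw [this]
          push_cast
          ring
      _ ≤ ∑ k, (p k * ((n : ℝ) * x ^ 2 + ((dA : ℝ) ^ 2 - dA) / κA)) := by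
          refine Finset.sum_le_sum fun k _ => ?_
          exact mul_le_mul_of_nonneg_left (by linarith [hblochA k]) (hp0 k)
      _ = (n : ℝ) * x ^ 2 + ((dA : ℝ) ^ 2 - dA) / κA := by
          rw [← Finset.sum_mul, hp1, one_mul]
  have hFB : ∑ ju, ∑ k, ‖Bmat ju k‖ ^ 2 ≤ (n : ℝ) * y ^ 2 + ((dB : ℝ) ^ 2 - dB) / κB := by
    rw [Finset.sum_comm]
    calc ∑ k, ∑ ju, ‖Bmat ju k‖ ^ 2
        = ∑ k, (p k * ((n : ℝ) * y ^ 2 + ∑ j, ‖b k j‖ ^ 2)) := by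
          refine Finset.sum_congr rfl fun k _ => ?_
          rw [Fintype.sum_sum_type]
          simp only [hBm, Matrix.of_apply, Sum.elim_inl, Sum.elim_inr, hnormsq, norm_star]
          rw [Finset.sum_const, Finset.card_univ, Fintype.card_fin, ← Finset.mul_sum]
          have : ‖((y : ℝ) : ℂ)‖ ^ 2 = y ^ 2 := by
            rw [Complex.norm_real, Real.norm_of_nonneg hy]
          rw [this]
          push_cast
          ring
      _ ≤ ∑ k, (p k * ((n : ℝ) * y ^ 2 + ((dB : ℝ) ^ 2 - dB) / κB)) := by
          refine Finset.sum_le_sum fun k _ => ?_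
          exact mul_le_mul_of_nonneg_left (by linarith [hblochB k]) (hp0 k)
      _ = (n : ℝ) * y ^ 2 + ((dB : ℝ) ^ 2 - dB) / κB := by
          rw [← Finset.sum_mul, hp1, one_mul]
  -- final assembly
  have hposA : (0 : ℝ) ≤ (n : ℝ) * x ^ 2 + ((dA : ℝ) ^ 2 - dA) / κA := by
    have h2 : (2 : ℝ) ≤ dA := by exact_mod_cast hdA
    have : (0 : ℝ) ≤ (dA : ℝ) ^ 2 - dA := by nlinarith
    positivity
  have hposB : (0 : ℝ) ≤ (n : ℝ) * y ^ 2 + ((dB : ℝ) ^ 2 - dB) / κB := by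
    have h2 : (2 : ℝ) ≤ dB := by exact_mod_cast hdB
    have : (0 : ℝ) ≤ (dB : ℝ) ^ 2 - dB := by nlinarith
    positivity
  calc traceNorm (normExtCorrTensor dA dB n x y r s T)
      = traceNorm (Amat * Bmatᴴ) := by rw [hfact]
    _ ≤ Real.sqrt (∑ iu, ∑ k, ‖Amat iu k‖ ^ 2) * Real.sqrt (∑ ju, ∑ k, ‖Bmat ju k‖ ^ 2) :=
        traceNorm_mul_conjTranspose_le Amat Bmat
    _ ≤ Real.sqrt ((n : ℝ) * x ^ 2 + ((dA : ℝ) ^ 2 - dA) / κA)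
        * Real.sqrt ((n : ℝ) * y ^ 2 + ((dB : ℝ) ^ 2 - dB) / κB) :=
        mul_le_mul (Real.sqrt_le_sqrt hFA) (Real.sqrt_le_sqrt hFB)
          (Real.sqrt_nonneg _) (Real.sqrt_nonneg _)
    _ = Real.sqrt (((n : ℝ) * x ^ 2 + ((dA : ℝ) ^ 2 - dA) / κA) *
        ((n : ℝ) * y ^ 2 + ((dB : ℝ) ^ 2 - dB) / κB)) := (Real.sqrt_mul hposA _).symm
end

section
/- Let ρ be a separable bipartite density matrix on ℂ^{d_A}⊗ℂ^{d_B}. Then its correlation matrix satisfies ‖T‖_tr ≤ √( (d_A − 1)(d_B − 1) / (κ_A κ_B d_A d_B) ); in particular ‖T‖_tr ≤ 1. -/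
open Matrix BigOperators Kronecker
open scoped ComplexOrder

namespace CCNR

noncomputable def frob {m n : Type*} [Fintype m] [Fintype n] (A B : Matrix m n ℂ) : ℂ :=
  ∑ x, ∑ y, star (A x y) * B x y

variable {m n : Type*} [Fintype m] [Fintype n]

lemma frob_eq_trace (A B : Matrix m n ℂ) : frob A B = (Aᴴ * B).trace := by
  unfold frob
  rw [Matrix.trace, Finset.sum_comm]
  simp [Matrix.mul_apply, Matrix.conjTranspose_apply, Matrix.diag]

lemma frob_add_right (A B C : Matrix m n ℂ) : frob A (B + C) = frob A B + frob A C := by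
  unfold frob; simp [mul_add, Finset.sum_add_distrib]

lemma frob_sub_right (A B C : Matrix m n ℂ) : frob A (B - C) = frob A B - frob A C := by
  unfold frob; simp [mul_sub, Finset.sum_sub_distrib]

lemma frob_sub_left (A B C : Matrix m n ℂ) : frob (A - B) C = frob A C - frob B C := by
  unfold frob; simp [sub_mul, Finset.sum_sub_distrib]

lemma frob_smul_right (c : ℂ) (A B : Matrix m n ℂ) : frob A (c • B) = c * frob A B := by
  unfold frob; simp [Finset.mul_sum]; ring_nf
  exact Finset.sum_congr rfl fun _ _ => Finset.sum_congr rfl fun _ _ => by ring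

lemma frob_smul_left (c : ℂ) (A B : Matrix m n ℂ) : frob (c • A) B = star c * frob A B := by
  unfold frob; simp [Finset.mul_sum]
  exact Finset.sum_congr rfl fun _ _ => Finset.sum_congr rfl fun _ _ => by ring

lemma frob_sum_right {ι : Type*} (s : Finset ι) (A : Matrix m n ℂ) (f : ι → Matrix m n ℂ) :
    frob A (∑ i ∈ s, f i) = ∑ i ∈ s, frob A (f i) := by
  unfold frob
  simp only [Matrix.sum_apply, Finset.mul_sum]
  calc ∑ x, ∑ y, ∑ i ∈ s, star (A x y) * f i x y
      = ∑ x, ∑ i ∈ s, ∑ y, star (A x y) * f i x y :=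
        Finset.sum_congr rfl fun x _ => Finset.sum_comm
    _ = ∑ i ∈ s, ∑ x, ∑ y, star (A x y) * f i x y := Finset.sum_comm

lemma frob_sum_left {ι : Type*} (s : Finset ι) (A : Matrix m n ℂ) (f : ι → Matrix m n ℂ) :
    frob (∑ i ∈ s, f i) A = ∑ i ∈ s, frob (f i) A := by
  unfold frob
  simp only [Matrix.sum_apply, star_sum, Finset.sum_mul]
  calc ∑ x, ∑ y, ∑ i ∈ s, star (f i x y) * A x y
      = ∑ x, ∑ i ∈ s, ∑ y, star (f i x y) * A x y :=
        Finset.sum_congr rfl fun x _ => Finset.sum_comm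
    _ = ∑ i ∈ s, ∑ x, ∑ y, star (f i x y) * A x y := Finset.sum_comm

variable {d : Type*} [Fintype d] [DecidableEq d]

lemma frob_one_right (A : Matrix d d ℂ) : frob A 1 = star A.trace := by
  unfold frob
  simp [Matrix.one_apply, Matrix.trace, Matrix.diag, mul_ite, star_sum]

lemma frob_one_left (A : Matrix d d ℂ) : frob 1 A = A.trace := by
  unfold frob
  simp [Matrix.one_apply, Matrix.trace, Matrix.diag, ite_mul]

lemma frob_kron {mA nA mB nB : Type*} [Fintype mA] [Fintype nA] [Fintype mB] [Fintype nB]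
    (A : Matrix mA nA ℂ) (B : Matrix mB nB ℂ) (C : Matrix mA nA ℂ) (D : Matrix mB nB ℂ) :
    frob (A ⊗ₖ B) (C ⊗ₖ D) = frob A C * frob B D := by
  have key : ∀ (f : mA → nA → ℂ) (g : mB → nB → ℂ),
      (∑ x1, ∑ x2 : mB, ∑ y1, ∑ y2 : nB, f x1 y1 * g x2 y2)
        = (∑ x1, ∑ y1, f x1 y1) * (∑ x2, ∑ y2, g x2 y2) := by
    intro f g
    conv_rhs => rw [Finset.sum_mul_sum]
    refine Finset.sum_congr rfl fun x1 _ => Finset.sum_congr rfl fun x2 _ => ?_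
    rw [Finset.sum_mul_sum]
  unfold frob
  simp only [Fintype.sum_prod_type, kroneckerMap_apply, star_mul']
  rw [← key (fun x1 y1 => star (A x1 y1) * C x1 y1) (fun x2 y2 => star (B x2 y2) * D x2 y2)]
  exact Finset.sum_congr rfl fun _ _ => Finset.sum_congr rfl fun _ _ =>
    Finset.sum_congr rfl fun _ _ => Finset.sum_congr rfl fun _ _ => by ring

lemma purity_le_one {d : Type*} [Fintype d] [DecidableEq d] {ρ : Matrix d d ℂ}
    (h : IsDensityMatrix ρ) : ∃ t : ℝ, 0 ≤ t ∧ t ≤ 1 ∧ (ρᴴ * ρ).trace = (t : ℂ) := by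
  obtain ⟨hpsd, htr⟩ := h
  have hH : ρ.IsHermitian := hpsd.1
  set U : Matrix d d ℂ := (Matrix.IsHermitian.eigenvectorUnitary hH : Matrix d d ℂ) with hU
  have hUU : star U * U = 1 := by
    have := (Matrix.IsHermitian.eigenvectorUnitary hH).2
    rw [Matrix.mem_unitaryGroup_iff'] at this
    exact this
  set D : Matrix d d ℂ := Matrix.diagonal (RCLike.ofReal ∘ hH.eigenvalues) with hD
  have hspec : ρ = U * D * star U := Matrix.IsHermitian.spectral_theorem hH
  have htrD : ∀ (M : Matrix d d ℂ), (U * M * star U).trace = M.trace := by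
    intro M
    rw [Matrix.trace_mul_cycle, Matrix.mul_assoc, ← Matrix.mul_assoc, hUU, Matrix.one_mul]
  have hsum1 : ∑ i, hH.eigenvalues i = 1 := by
    have : ρ.trace = ∑ i, (hH.eigenvalues i : ℂ) := by
      conv_lhs => rw [hspec]
      rw [htrD, hD, Matrix.trace_diagonal]
      simp
    rw [htr] at this
    have := this.symm
    rw [← Complex.ofReal_sum] at this
    exact_mod_cast this
  have hnn : ∀ i, 0 ≤ hH.eigenvalues i := fun i => hpsd.eigenvalues_nonneg i
  refine ⟨∑ i, hH.eigenvalues i ^ 2, Finset.sum_nonneg fun i _ => sq_nonneg _, ?_, ?_⟩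
  · calc ∑ i, hH.eigenvalues i ^ 2 ≤ (∑ i, hH.eigenvalues i) ^ 2 :=
        Finset.sum_sq_le_sq_sum_of_nonneg fun i _ => hnn i
      _ = 1 := by rw [hsum1]; norm_num
  · have hρρ : ρᴴ * ρ = U * (D * D) * star U := by
      rw [hH.eq, hspec]
      calc U * D * star U * (U * D * star U) = U * D * (star U * U) * (D * star U) := by
            noncomm_ring
        _ = U * (D * D) * star U := by rw [hUU]; noncomm_ring
    rw [hρρ, htrD, hD, Matrix.diagonal_mul_diagonal, Matrix.trace_diagonal]
    push_cast
    refine Finset.sum_congr rfl fun i _ => ?_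
    simp [pow_two]
lemma coeff_bound (d : ℕ) (hd : 0 < d) {κ : ℝ} (hκ : 0 < κ)
    {nn : Type*} [Fintype nn] [DecidableEq nn]
    (G : nn → Matrix (Fin d) (Fin d) ℂ)
    (hGtr : ∀ i, (G i).trace = 0)
    (hGorth : ∀ i j, frob (G i) (G j) = if i = j then (κ : ℂ) else 0)
    (hGspan : ∀ X : Matrix (Fin d) (Fin d) ℂ, X.trace = 0 →
      X ∈ Submodule.span ℂ (Set.range G))
    {ρ : Matrix (Fin d) (Fin d) ℂ} (hρ : IsDensityMatrix ρ) :
    ∑ i, ‖frob (G i) ρ / (κ : ℂ)‖ ^ 2 ≤ ((d : ℝ) - 1) / (κ * d) := by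
  have hdC : ((d : ℂ)) ≠ 0 := by exact_mod_cast Nat.cast_ne_zero.mpr hd.ne'
  have hκC : ((κ : ℂ)) ≠ 0 := by exact_mod_cast Complex.ofReal_ne_zero.mpr hκ.ne'
  set X : Matrix (Fin d) (Fin d) ℂ := ρ - (d : ℂ)⁻¹ • 1 with hX
  have htrX : X.trace = 0 := by
    rw [hX, Matrix.trace_sub, Matrix.trace_smul, Matrix.trace_one, hρ.2]
    simp [hdC, inv_mul_cancel₀]
  obtain ⟨c, hc⟩ := Submodule.mem_span_range_iff_exists_fun ℂ |>.mp (hGspan X htrX)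
  -- frob (G i) ρ = c i * κ
  have hfrobX : ∀ i, frob (G i) X = c i * κ := by
    intro i
    rw [← hc, frob_sum_right]
    have : ∀ j, frob (G i) (c j • G j) = c j * frob (G i) (G j) := fun j =>
      frob_smul_right _ _ _
    simp only [this, hGorth, mul_ite, mul_zero]
    rw [Finset.sum_ite_eq]
    simp
  have hfrobρ : ∀ i, frob (G i) ρ = c i * κ := by
    intro i
    have : ρ = X + (d : ℂ)⁻¹ • 1 := by rw [hX, sub_add_cancel]
    rw [this, frob_add_right, frob_smul_right, frob_one_right, hGtr, star_zero, mul_zero,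
      add_zero, hfrobX]
  -- frob X X computed two ways
  have hXXl : frob X X = (κ : ℂ) * ∑ i, (‖c i‖ ^ 2 : ℝ) := by
    calc frob X X = ∑ i, frob (c i • G i) X := by rw [← hc, frob_sum_left]
      _ = ∑ i, star (c i) * (c i * κ) := by
          refine Finset.sum_congr rfl fun i _ => ?_
          rw [frob_smul_left, hfrobX]
      _ = (κ : ℂ) * ∑ i, (‖c i‖ ^ 2 : ℝ) := by
          push_cast
          rw [Finset.mul_sum]
          refine Finset.sum_congr rfl fun i _ => ?_
          rw [show star (c i) * (c i * (κ : ℂ)) = c i * (starRingEnd ℂ) (c i) * κ by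
            rw [Complex.star_def]; ring, Complex.mul_conj, Complex.normSq_eq_norm_sq]
          push_cast
          ring
  obtain ⟨t, ht0, ht1, htt⟩ := purity_le_one hρ
  have h1 : frob ρ ρ = (t : ℂ) := by rw [frob_eq_trace]; exact htt
  have h2 : frob ρ ((d : ℂ)⁻¹ • 1) = (d : ℂ)⁻¹ := by
    rw [frob_smul_right, frob_one_right, hρ.2]; simp
  have h3 : frob ((d : ℂ)⁻¹ • 1) ρ = (d : ℂ)⁻¹ := by
    rw [frob_smul_left, frob_one_left, hρ.2]; simp
  have h4 : frob ((d : ℂ)⁻¹ • (1 : Matrix (Fin d) (Fin d) ℂ)) ((d : ℂ)⁻¹ • 1) = (d : ℂ)⁻¹ := by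
    rw [frob_smul_right, frob_smul_left, frob_one_left, Matrix.trace_one]
    simp only [star_inv₀, star_natCast, Fintype.card_fin]
    field_simp
  have hXXr : frob X X = (t : ℂ) - (d : ℂ)⁻¹ := by
    rw [hX, frob_sub_right, frob_sub_left, frob_sub_left, h1, h2, h3, h4]
    ring
  have hdpos : (0 : ℝ) < d := by exact_mod_cast hd
  have hreal : κ * ∑ i, ‖c i‖ ^ 2 = t - (d : ℝ)⁻¹ := by
    have h5 := hXXl.symm.trans hXXr
    rw [show ((d : ℂ))⁻¹ = (((d : ℝ))⁻¹ : ℂ) by push_cast; ring] at h5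
    exact_mod_cast h5
  have hcb : ∑ i, ‖c i‖ ^ 2 ≤ ((d : ℝ) - 1) / (κ * d) := by
    have h6 : ∑ i, ‖c i‖ ^ 2 = (t - (d : ℝ)⁻¹) / κ := by
      field_simp at hreal ⊢
      linarith
    rw [h6, div_le_div_iff₀ hκ (by positivity)]
    have h7 : (d : ℝ)⁻¹ * d = 1 := inv_mul_cancel₀ hdpos.ne'
    nlinarith [mul_pos hκ hdpos]
  have h8 : ∀ i, frob (G i) ρ / (κ : ℂ) = c i := by
    intro i
    rw [hfrobρ, mul_div_cancel_right₀ _ hκC]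
  simp only [h8]
  exact hcb

lemma cs_sum {ι : Type*} [Fintype ι] (f g : ι → ℝ) (hf : ∀ i, 0 ≤ f i) (hg : ∀ i, 0 ≤ g i) :
    ∑ i, f i * g i ≤ Real.sqrt (∑ i, f i ^ 2) * Real.sqrt (∑ i, g i ^ 2) := by
  have h1 : (∑ i, f i * g i) ^ 2 ≤ (∑ i, f i ^ 2) * ∑ i, g i ^ 2 :=
    Finset.sum_mul_sq_le_sq_mul_sq _ _ _
  have h2 : 0 ≤ ∑ i, f i * g i := Finset.sum_nonneg fun i _ => mul_nonneg (hf i) (hg i)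
  calc ∑ i, f i * g i = Real.sqrt ((∑ i, f i * g i) ^ 2) := (Real.sqrt_sq h2).symm
    _ ≤ Real.sqrt ((∑ i, f i ^ 2) * ∑ i, g i ^ 2) := Real.sqrt_le_sqrt h1
    _ = _ := Real.sqrt_mul (Finset.sum_nonneg fun i _ => sq_nonneg _) _

lemma traceNorm_le_sum {m k : Type*} [Fintype m] [Fintype k] [DecidableEq k]
    {N : ℕ} (p : Fin N → ℝ) (hp : ∀ n, 0 ≤ p n)
    (a : Fin N → m → ℂ) (b : Fin N → k → ℂ)
    (X : Matrix m k ℂ) (hX : ∀ i j, X i j = ∑ n, (p n : ℂ) * a n i * b n j) :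
    traceNorm X ≤
      ∑ n, p n * (Real.sqrt (∑ i, ‖a n i‖ ^ 2) * Real.sqrt (∑ j, ‖b n j‖ ^ 2)) := by
  classical
  rw [traceNorm]
  set hH := Matrix.isHermitian_conjTranspose_mul_self X with hHdef
  set lam : k → ℝ := hH.eigenvalues with hlam
  set v : k → (k → ℂ) := fun i => ⇑(hH.eigenvectorBasis i) with hv
  set u : k → (m → ℂ) := fun i => X *ᵥ v i with hu
  have hnn : ∀ i, 0 ≤ lam i := fun i =>
    (Matrix.posSemidef_conjTranspose_mul_self X).eigenvalues_nonneg i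
  have hmv : ∀ i, (Xᴴ * X) *ᵥ v i = lam i • v i := fun i => hH.mulVec_eigenvectorBasis i
  have hov : ∀ i j, star (v i) ⬝ᵥ v j = if i = j then 1 else 0 := by
    intro i j
    have h := (orthonormal_iff_ite.mp hH.eigenvectorBasis.orthonormal) i j
    rw [PiLp.inner_apply] at h
    simpa [dotProduct, Pi.star_apply, RCLike.inner_apply, hv, mul_comm] using h
  have huu : ∀ i j, star (u i) ⬝ᵥ u j = if i = j then ((lam j : ℂ)) else 0 := by
    intro i j
    calc star (u i) ⬝ᵥ u j = (star (v i) ᵥ* Xᴴ) ⬝ᵥ (X *ᵥ v j) := by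
          rw [hu, Matrix.star_mulVec]
      _ = star (v i) ⬝ᵥ (Xᴴ *ᵥ (X *ᵥ v j)) := (dotProduct_mulVec _ _ _).symm
      _ = star (v i) ⬝ᵥ ((Xᴴ * X) *ᵥ v j) := by rw [Matrix.mulVec_mulVec]
      _ = star (v i) ⬝ᵥ (lam j • v j) := by rw [hmv]
      _ = (lam j : ℂ) * (star (v i) ⬝ᵥ v j) := by
          rw [dotProduct_smul]
          simp [Complex.real_smul]
      _ = if i = j then ((lam j : ℂ)) else 0 := by rw [hov]; split <;> simp
  have huexp : ∀ i x, u i x = ∑ n, (p n : ℂ) * a n x * (b n ⬝ᵥ v i) := by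
    intro i x
    show (X *ᵥ v i) x = _
    rw [Matrix.mulVec, dotProduct]
    simp only [hX, Finset.sum_mul]
    rw [Finset.sum_comm]
    refine Finset.sum_congr rfl fun n _ => ?_
    rw [dotProduct, Finset.mul_sum]
    exact Finset.sum_congr rfl fun y _ => by ring
  have hkey : ∀ i, (lam i : ℂ) = ∑ n, (p n : ℂ) * (b n ⬝ᵥ v i) * (star (u i) ⬝ᵥ a n) := by
    intro i
    have h := huu i i
    simp only [eq_self_iff_true, if_true] at h
    rw [← h]
    conv_lhs => rw [dotProduct]
    have hterm : ∀ x, star (u i) x * u i x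
        = ∑ n, (p n : ℂ) * (b n ⬝ᵥ v i) * (star (u i) x * a n x) := by
      intro x
      rw [huexp i x, Finset.mul_sum]
      exact Finset.sum_congr rfl fun n _ => by ring
    simp only [hterm]
    rw [Finset.sum_comm]
    refine Finset.sum_congr rfl fun n _ => ?_
    generalize b n ⬝ᵥ v i = c
    rw [dotProduct, Finset.mul_sum]
  have hbound : ∀ i, lam i ≤ ∑ n, p n * (‖b n ⬝ᵥ v i‖ * ‖star (u i) ⬝ᵥ a n‖) := by
    intro i
    have h1 : lam i = (∑ n, (p n : ℂ) * (b n ⬝ᵥ v i) * (star (u i) ⬝ᵥ a n)).re := by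
      rw [← hkey i, Complex.ofReal_re]
    rw [h1, Complex.re_sum]
    refine Finset.sum_le_sum fun n _ => ?_
    calc ((p n : ℂ) * (b n ⬝ᵥ v i) * (star (u i) ⬝ᵥ a n)).re
        ≤ ‖(p n : ℂ) * (b n ⬝ᵥ v i) * (star (u i) ⬝ᵥ a n)‖ := Complex.re_le_norm _
      _ = p n * (‖b n ⬝ᵥ v i‖ * ‖star (u i) ⬝ᵥ a n‖) := by
          rw [norm_mul, norm_mul, Complex.norm_real, Real.norm_eq_abs,
            abs_of_nonneg (hp n), mul_assoc]
  set β : Fin N → k → ℝ := fun n i => ‖b n ⬝ᵥ v i‖ with hβ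
  set α : Fin N → k → ℝ := fun n i =>
    if lam i = 0 then 0 else ‖star (u i) ⬝ᵥ a n‖ / Real.sqrt (lam i) with hα
  have hβnn : ∀ n i, 0 ≤ β n i := fun n i => norm_nonneg _
  have hαnn : ∀ n i, 0 ≤ α n i := by
    intro n i
    rw [hα]
    dsimp only
    split
    · exact le_rfl
    · exact div_nonneg (norm_nonneg _) (Real.sqrt_nonneg _)
  have hsqrt : ∀ i, Real.sqrt (lam i) ≤ ∑ n, p n * (β n i * α n i) := by
    intro i
    by_cases h0 : lam i = 0
    · have : ∀ n, α n i = 0 := fun n => by rw [hα]; simp [h0]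
      simp [h0, this]
    · have hpos : 0 < lam i := lt_of_le_of_ne (hnn i) (Ne.symm h0)
      have hs : 0 < Real.sqrt (lam i) := Real.sqrt_pos.mpr hpos
      have hα' : ∀ n, α n i = ‖star (u i) ⬝ᵥ a n‖ / Real.sqrt (lam i) := fun n => by
        rw [hα]; simp [h0]
      have h1 : Real.sqrt (lam i) = lam i / Real.sqrt (lam i) := by
        rw [eq_div_iff hs.ne', Real.mul_self_sqrt (hnn i)]
      rw [h1]
      have h2 : lam i / Real.sqrt (lam i)
          ≤ (∑ n, p n * (‖b n ⬝ᵥ v i‖ * ‖star (u i) ⬝ᵥ a n‖)) / Real.sqrt (lam i) := by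
        gcongr
        exact hbound i
      refine h2.trans (le_of_eq ?_)
      rw [Finset.sum_div]
      refine Finset.sum_congr rfl fun n _ => ?_
      rw [hα']
      have : β n i = ‖b n ⬝ᵥ v i‖ := rfl
      rw [this]
      ring
  -- Bessel for the b-side
  have besselB : ∀ n, ∑ i, β n i ^ 2 ≤ ∑ j, ‖b n j‖ ^ 2 := by
    intro n
    set y : EuclideanSpace ℂ k := (WithLp.equiv 2 (k → ℂ)).symm (star (b n)) with hy
    have hbes := hH.eigenvectorBasis.orthonormal.sum_inner_products_le
      (𝕜 := ℂ) y (s := Finset.univ)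
    have hinner : ∀ i, ‖(inner ℂ (hH.eigenvectorBasis i) y : ℂ)‖ = β n i := by
      intro i
      have : (inner ℂ (hH.eigenvectorBasis i) y : ℂ) = (starRingEnd ℂ) (b n ⬝ᵥ v i) := by
        rw [PiLp.inner_apply, dotProduct, map_sum]
        refine Finset.sum_congr rfl fun t _ => ?_
        simp [hy, hv, RCLike.inner_apply, WithLp.equiv_symm_apply, Pi.star_apply,
          Complex.star_def, mul_comm]
      rw [this, RCLike.norm_conj]
    have hynorm : ‖y‖ ^ 2 = ∑ j, ‖b n j‖ ^ 2 := by
      rw [EuclideanSpace.norm_eq, Real.sq_sqrt (Finset.sum_nonneg fun j _ => sq_nonneg _)]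
      refine Finset.sum_congr rfl fun j _ => ?_
      simp [hy, WithLp.equiv_symm_apply, Pi.star_apply]
    calc ∑ i, β n i ^ 2 = ∑ i, ‖(inner ℂ (hH.eigenvectorBasis i) y : ℂ)‖ ^ 2 := by
          exact Finset.sum_congr rfl fun i _ => by rw [hinner]
      _ ≤ ‖y‖ ^ 2 := hbes
      _ = ∑ j, ‖b n j‖ ^ 2 := hynorm
  -- Bessel for the a-side
  have besselA : ∀ n, ∑ i, α n i ^ 2 ≤ ∑ x, ‖a n x‖ ^ 2 := by
    intro n
    set w : {i // lam i ≠ 0} → EuclideanSpace ℂ m := fun i =>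
      (((Real.sqrt (lam i.1))⁻¹ : ℝ) : ℂ) • (WithLp.equiv 2 (m → ℂ)).symm (u i.1) with hw
    have hinner_uu : ∀ (i j : k),
        (inner ℂ ((WithLp.equiv 2 (m → ℂ)).symm (u i)) ((WithLp.equiv 2 (m → ℂ)).symm (u j)) : ℂ)
          = star (u i) ⬝ᵥ u j := by
      intro i j
      rw [PiLp.inner_apply, dotProduct]
      refine Finset.sum_congr rfl fun t _ => ?_
      simp [RCLike.inner_apply, WithLp.equiv_symm_apply, Pi.star_apply, Complex.star_def, mul_comm]
    have hortho : Orthonormal ℂ w := by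
      rw [orthonormal_iff_ite]
      intro i j
      rw [hw]
      dsimp only
      rw [inner_smul_left, inner_smul_right, hinner_uu, huu]
      by_cases hij : i = j
      · subst hij
        simp only [eq_self_iff_true, if_true]
        have hpos : 0 < lam i.1 := lt_of_le_of_ne (hnn i.1) (Ne.symm i.2)
        have hs : 0 < Real.sqrt (lam i.1) := Real.sqrt_pos.mpr hpos
        rw [Complex.conj_ofReal]
        rw [show ((((Real.sqrt (lam i.1))⁻¹ : ℝ) : ℂ) * ((((Real.sqrt (lam i.1))⁻¹ : ℝ) : ℂ) * (lam i.1 : ℂ))) = ((((Real.sqrt (lam i.1))⁻¹ * (Real.sqrt (lam i.1))⁻¹ * lam i.1 : ℝ)) : ℂ) by push_cast; ring]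
        rw [show ((Real.sqrt (lam i.1))⁻¹ * (Real.sqrt (lam i.1))⁻¹ * lam i.1 : ℝ) = (1 : ℝ) by
          field_simp; rw [Real.sq_sqrt (hnn i.1)]]
        exact Complex.ofReal_one
      · have hvij : i.1 ≠ j.1 := fun hv' => hij (Subtype.ext hv')
        simp [hvij, hij]
    have hbes := hortho.sum_inner_products_le (𝕜 := ℂ)
      ((WithLp.equiv 2 (m → ℂ)).symm (a n)) (s := Finset.univ)
    have hin : ∀ (i : {i // lam i ≠ 0}),
        ‖(inner ℂ (w i) ((WithLp.equiv 2 (m → ℂ)).symm (a n)) : ℂ)‖ = α n i.1 := by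
      intro i
      rw [hw]
      dsimp only
      rw [inner_smul_left, Complex.conj_ofReal]
      have : (inner ℂ ((WithLp.equiv 2 (m → ℂ)).symm (u i.1)) ((WithLp.equiv 2 (m → ℂ)).symm (a n)) : ℂ)
          = star (u i.1) ⬝ᵥ a n := by
        rw [PiLp.inner_apply, dotProduct]
        refine Finset.sum_congr rfl fun t _ => ?_
        simp [RCLike.inner_apply, WithLp.equiv_symm_apply, Pi.star_apply, Complex.star_def, mul_comm]
      rw [this, norm_mul, Complex.norm_real, Real.norm_eq_abs,
        abs_of_nonneg (inv_nonneg.mpr (Real.sqrt_nonneg _))]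
      rw [hα]
      simp only [i.2, if_false]
      rw [div_eq_inv_mul]
    have hanorm : ‖(WithLp.equiv 2 (m → ℂ)).symm (a n)‖ ^ 2 = ∑ x, ‖a n x‖ ^ 2 := by
      rw [EuclideanSpace.norm_eq, Real.sq_sqrt (Finset.sum_nonneg fun j _ => sq_nonneg _)]
      refine Finset.sum_congr rfl fun j _ => ?_
      simp [WithLp.equiv_symm_apply]
    have hsplit : ∑ i, α n i ^ 2 = ∑ i : {i // lam i ≠ 0}, α n i.1 ^ 2 := by
      rw [← Finset.sum_subtype (Finset.univ.filter (fun i => lam i ≠ 0))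
        (by simp) (fun i => α n i ^ 2)]
      rw [← Finset.sum_filter_add_sum_filter_not Finset.univ (fun i => lam i ≠ 0)
        (fun i => α n i ^ 2)]
      have : ∑ i ∈ Finset.univ.filter (fun i => ¬ lam i ≠ 0), α n i ^ 2 = 0 := by
        refine Finset.sum_eq_zero fun i hi => ?_
        have h0 : lam i = 0 := by simpa using (Finset.mem_filter.mp hi).2
        rw [hα]
        simp [h0]
      rw [this, add_zero]
    calc ∑ i, α n i ^ 2 = ∑ i : {i // lam i ≠ 0}, α n i.1 ^ 2 := hsplit
      _ = ∑ i : {i // lam i ≠ 0},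
            ‖(inner ℂ (w i) ((WithLp.equiv 2 (m → ℂ)).symm (a n)) : ℂ)‖ ^ 2 :=
          Finset.sum_congr rfl fun i _ => by rw [hin]
      _ ≤ ‖(WithLp.equiv 2 (m → ℂ)).symm (a n)‖ ^ 2 := hbes
      _ = ∑ x, ‖a n x‖ ^ 2 := hanorm
  calc ∑ i, Real.sqrt (lam i) ≤ ∑ i, ∑ n, p n * (β n i * α n i) :=
        Finset.sum_le_sum fun i _ => hsqrt i
    _ = ∑ n, p n * ∑ i, β n i * α n i := by
        rw [Finset.sum_comm]
        exact Finset.sum_congr rfl fun n _ => by rw [Finset.mul_sum]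
    _ ≤ ∑ n, p n * (Real.sqrt (∑ i, ‖a n i‖ ^ 2) * Real.sqrt (∑ j, ‖b n j‖ ^ 2)) := by
        refine Finset.sum_le_sum fun n _ => mul_le_mul_of_nonneg_left ?_ (hp n)
        calc ∑ i, β n i * α n i
            ≤ Real.sqrt (∑ i, β n i ^ 2) * Real.sqrt (∑ i, α n i ^ 2) :=
              cs_sum _ _ (hβnn n) (hαnn n)
          _ ≤ Real.sqrt (∑ j, ‖b n j‖ ^ 2) * Real.sqrt (∑ x, ‖a n x‖ ^ 2) :=
              mul_le_mul (Real.sqrt_le_sqrt (besselB n)) (Real.sqrt_le_sqrt (besselA n))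
                (Real.sqrt_nonneg _) (Real.sqrt_nonneg _)
          _ = Real.sqrt (∑ x, ‖a n x‖ ^ 2) * Real.sqrt (∑ j, ‖b n j‖ ^ 2) := mul_comm _ _

end CCNR

/-- **CCNR-type bound**: for a separable bipartite density matrix the correlation matrix
satisfies `‖T‖_tr ≤ √((d_A − 1)(d_B − 1)/(κ_A κ_B d_A d_B)) ≤ 1`. -/
theorem traceNorm_correlation_matrix_le_of_separable
    (dA dB : ℕ) (hdA : 2 ≤ dA) (hdB : 2 ≤ dB)
    (κA κB : ℝ) (hκA : 1 ≤ κA) (hκB : 1 ≤ κB)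
    (GA : Fin (dA ^ 2 - 1) → Matrix (Fin dA) (Fin dA) ℂ)
    (GB : Fin (dB ^ 2 - 1) → Matrix (Fin dB) (Fin dB) ℂ)
    (hGAtr : ∀ i, (GA i).trace = 0)
    (hGBtr : ∀ j, (GB j).trace = 0)
    (hGAorth : ∀ i j, ((GA i)ᴴ * GA j).trace = if i = j then (κA : ℂ) else 0)
    (hGBorth : ∀ i j, ((GB i)ᴴ * GB j).trace = if i = j then (κB : ℂ) else 0)
    (hGAspan : ∀ X : Matrix (Fin dA) (Fin dA) ℂ, X.trace = 0 →
      X ∈ Submodule.span ℂ (Set.range GA))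
    (hGBspan : ∀ X : Matrix (Fin dB) (Fin dB) ℂ, X.trace = 0 →
      X ∈ Submodule.span ℂ (Set.range GB))
    (ρ : Matrix (Fin dA × Fin dB) (Fin dA × Fin dB) ℂ)
    (hρ : IsDensityMatrix ρ)
    (hsep : IsSeparableState dA dB ρ)
    (r : Fin (dA ^ 2 - 1) → ℂ) (s : Fin (dB ^ 2 - 1) → ℂ)
    (T : Matrix (Fin (dA ^ 2 - 1)) (Fin (dB ^ 2 - 1)) ℂ)
    (hexp : ρ =
      ((dA : ℂ)⁻¹ • (1 : Matrix (Fin dA) (Fin dA) ℂ)) ⊗ₖ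
        ((dB : ℂ)⁻¹ • (1 : Matrix (Fin dB) (Fin dB) ℂ))
      + ∑ i, r i • (GA i ⊗ₖ ((dB : ℂ)⁻¹ • (1 : Matrix (Fin dB) (Fin dB) ℂ)))
      + ∑ j, s j • (((dA : ℂ)⁻¹ • (1 : Matrix (Fin dA) (Fin dA) ℂ)) ⊗ₖ GB j)
      + ∑ i, ∑ j, T i j • (GA i ⊗ₖ GB j))
 :
    traceNorm T ≤
      Real.sqrt (((dA : ℝ) - 1) * ((dB : ℝ) - 1) / (κA * κB * dA * dB)) ∧
    traceNorm T ≤ 1 := by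
  classical
  obtain ⟨N, p, ρA, ρB, hp, hpsum, hρA, hρB, hρrep⟩ := hsep
  have hκA0 : (0 : ℝ) < κA := lt_of_lt_of_le one_pos hκA
  have hκB0 : (0 : ℝ) < κB := lt_of_lt_of_le one_pos hκB
  have hκAC : (κA : ℂ) ≠ 0 := Complex.ofReal_ne_zero.mpr hκA0.ne'
  have hκBC : (κB : ℂ) ≠ 0 := Complex.ofReal_ne_zero.mpr hκB0.ne'
  have hdA2 : (2 : ℝ) ≤ (dA : ℝ) := by exact_mod_cast hdA
  have hdB2 : (2 : ℝ) ≤ (dB : ℝ) := by exact_mod_cast hdB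
  have hdA0 : 0 < dA := lt_of_lt_of_le (by norm_num) hdA
  have hdB0 : 0 < dB := lt_of_lt_of_le (by norm_num) hdB
  have horthA : ∀ i j, CCNR.frob (GA i) (GA j) = if i = j then (κA : ℂ) else 0 :=
    fun i j => (CCNR.frob_eq_trace _ _).trans (hGAorth i j)
  have horthB : ∀ i j, CCNR.frob (GB i) (GB j) = if i = j then (κB : ℂ) else 0 :=
    fun i j => (CCNR.frob_eq_trace _ _).trans (hGBorth i j)
  have hEq := hexp.symm.trans hρrep
  have key : ∀ i j, T i j * ((κA : ℂ) * κB)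
      = ∑ n, (p n : ℂ) * (CCNR.frob (GA i) (ρA n) * CCNR.frob (GB j) (ρB n)) := by
    intro i j
    have h := congrArg (CCNR.frob (GA i ⊗ₖ GB j)) hEq
    simp only [CCNR.frob_add_right, CCNR.frob_sum_right, CCNR.frob_smul_right, CCNR.frob_kron,
      CCNR.frob_one_right, hGAtr, hGBtr, star_zero, mul_zero, zero_mul, add_zero, zero_add,
      Finset.sum_const_zero, horthA, horthB, mul_ite, ite_mul] at h
    simp only [Finset.sum_ite_eq, Finset.mem_univ, if_true, mul_zero, zero_mul,
      Finset.sum_const_zero] at h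
    rw [← h]
    ring
  set aa : Fin N → Fin (dA ^ 2 - 1) → ℂ := fun n i => CCNR.frob (GA i) (ρA n) / κA with haa
  set bb : Fin N → Fin (dB ^ 2 - 1) → ℂ := fun n j => CCNR.frob (GB j) (ρB n) / κB with hbb
  have hT : ∀ i j, T i j = ∑ n, (p n : ℂ) * aa n i * bb n j := by
    intro i j
    have h2 : ∑ n, (p n : ℂ) * aa n i * bb n j
        = ((κA : ℂ) * κB)⁻¹
          * ∑ n, (p n : ℂ) * (CCNR.frob (GA i) (ρA n) * CCNR.frob (GB j) (ρB n)) := by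
      rw [Finset.mul_sum]
      refine Finset.sum_congr rfl fun n _ => ?_
      rw [haa, hbb]
      dsimp only
      field_simp
    rw [h2, ← key i j]
    field_simp
  have hCA : ∀ n, ∑ i, ‖aa n i‖ ^ 2 ≤ ((dA : ℝ) - 1) / (κA * dA) := fun n =>
    CCNR.coeff_bound dA hdA0 hκA0 GA hGAtr horthA hGAspan (hρA n)
  have hCB : ∀ n, ∑ j, ‖bb n j‖ ^ 2 ≤ ((dB : ℝ) - 1) / (κB * dB) := fun n =>
    CCNR.coeff_bound dB hdB0 hκB0 GB hGBtr horthB hGBspan (hρB n)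
  have hCAnn : (0 : ℝ) ≤ ((dA : ℝ) - 1) / (κA * dA) :=
    div_nonneg (by linarith) (by positivity)
  have hCBnn : (0 : ℝ) ≤ ((dB : ℝ) - 1) / (κB * dB) :=
    div_nonneg (by linarith) (by positivity)
  have step1 : traceNorm T
      ≤ ∑ n, p n * (Real.sqrt (∑ i, ‖aa n i‖ ^ 2) * Real.sqrt (∑ j, ‖bb n j‖ ^ 2)) :=
    CCNR.traceNorm_le_sum p hp aa bb T hT
  have step2 : traceNorm T
      ≤ Real.sqrt (((dA : ℝ) - 1) / (κA * dA)) * Real.sqrt (((dB : ℝ) - 1) / (κB * dB)) := by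
    refine step1.trans ?_
    calc ∑ n, p n * (Real.sqrt (∑ i, ‖aa n i‖ ^ 2) * Real.sqrt (∑ j, ‖bb n j‖ ^ 2))
        ≤ ∑ n, p n * (Real.sqrt (((dA : ℝ) - 1) / (κA * dA))
            * Real.sqrt (((dB : ℝ) - 1) / (κB * dB))) := by
          refine Finset.sum_le_sum fun n _ => mul_le_mul_of_nonneg_left ?_ (hp n)
          exact mul_le_mul (Real.sqrt_le_sqrt (hCA n)) (Real.sqrt_le_sqrt (hCB n))
            (Real.sqrt_nonneg _) (Real.sqrt_nonneg _)
      _ = Real.sqrt (((dA : ℝ) - 1) / (κA * dA)) * Real.sqrt (((dB : ℝ) - 1) / (κB * dB)) := by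
          rw [← Finset.sum_mul, hpsum, one_mul]
  have hprod : Real.sqrt (((dA : ℝ) - 1) / (κA * dA)) * Real.sqrt (((dB : ℝ) - 1) / (κB * dB))
      = Real.sqrt (((dA : ℝ) - 1) * ((dB : ℝ) - 1) / (κA * κB * dA * dB)) := by
    rw [← Real.sqrt_mul hCAnn]
    congr 1
    rw [div_mul_div_comm]
    congr 1
    ring
  have hfirst : traceNorm T
      ≤ Real.sqrt (((dA : ℝ) - 1) * ((dB : ℝ) - 1) / (κA * κB * dA * dB)) := by
    rw [← hprod]; exact step2
  refine ⟨hfirst, hfirst.trans ?_⟩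
  have harg : ((dA : ℝ) - 1) * ((dB : ℝ) - 1) / (κA * κB * dA * dB) ≤ 1 := by
    rw [div_le_one (by positivity)]
    have hk1 : (1 : ℝ) ≤ κA * κB := by nlinarith
    calc ((dA : ℝ) - 1) * ((dB : ℝ) - 1) ≤ (dA : ℝ) * dB := by nlinarith
      _ = 1 * ((dA : ℝ) * dB) := (one_mul _).symm
      _ ≤ (κA * κB) * ((dA : ℝ) * dB) := mul_le_mul_of_nonneg_right hk1 (by positivity)
      _ = κA * κB * dA * dB := by ring
  calc Real.sqrt (((dA : ℝ) - 1) * ((dB : ℝ) - 1) / (κA * κB * dA * dB))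
      ≤ Real.sqrt 1 := Real.sqrt_le_sqrt harg
    _ = 1 := Real.sqrt_one
end

section
/- Let ρ be a separable bipartite density matrix on ℂ^{d_A}⊗ℂ^{d_B}, and take the generalized Gell-Mann matrices (so κ_A = κ_B = 2) as the traceless orthogonal bases. Then for all real x, y ≥ 0 and every positive integer n, the normalized extended correlation tensor satisfies ‖M̂_{x,y}^{(n)}‖_tr ≤ (1/2) √( (2n x² + d_A² − d_A)(2n y² + d_B² − d_B) ). -/
open Matrix BigOperators Kronecker
open scoped ComplexOrder

lemma herm_trace_real {d : Type*} [Fintype d] (A B : Matrix d d ℂ)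
    (hA : A.IsHermitian) (hB : B.IsHermitian) :
    (A * B).trace = (((A * B).trace.re : ℝ) : ℂ) := by
  have h : (starRingEnd ℂ) ((A * B).trace) = (A * B).trace := by
    have := Matrix.trace_conjTranspose (A * B)
    rw [Matrix.conjTranspose_mul, hA.eq, hB.eq, Matrix.trace_mul_comm] at this
    exact this.symm
  exact (Complex.conj_eq_iff_re.mp h).symm

lemma trace_sq_le_one {d : Type*} [Fintype d] [DecidableEq d]
    (ρ : Matrix d d ℂ) (h : IsDensityMatrix ρ) :
    ∃ q : ℝ, (ρ * ρ).trace = (q : ℂ) ∧ q ≤ 1 := by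
  classical
  have hherm : ρ.IsHermitian := h.1.1
  set V : Matrix d d ℂ := (hherm.eigenvectorUnitary : Matrix d d ℂ) with hV
  set D : Matrix d d ℂ := Matrix.diagonal (RCLike.ofReal ∘ hherm.eigenvalues) with hD
  have hsp : ρ = V * D * star V := hherm.spectral_theorem
  have hUV : star V * V = 1 := by
    exact Matrix.mem_unitaryGroup_iff'.mp (hherm.eigenvectorUnitary).2
  have htrD : ∀ (M : Matrix d d ℂ), (V * M * star V).trace = M.trace := by
    intro M
    rw [Matrix.trace_mul_cycle, hUV, Matrix.one_mul]
  have hρ2 : ρ * ρ = V * (D * D) * star V := by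
    rw [hsp]
    simp only [Matrix.mul_assoc]
    rw [← Matrix.mul_assoc (star V) V (D * star V), hUV, Matrix.one_mul]
  have htr2 : (ρ * ρ).trace = ∑ i, ((hherm.eigenvalues i : ℝ) : ℂ) ^ 2 := by
    rw [hρ2, htrD, hD, Matrix.diagonal_mul_diagonal, Matrix.trace_diagonal]
    simp [sq]
  have htr1 : (1 : ℂ) = ∑ i, ((hherm.eigenvalues i : ℝ) : ℂ) := by
    rw [← h.2]
    conv_lhs => rw [hsp]
    rw [htrD, hD, Matrix.trace_diagonal]
    simp
  have hsum1 : ∑ i, hherm.eigenvalues i = 1 := by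
    have := htr1
    push_cast at this
    exact_mod_cast (Complex.ofReal_inj.mp (by push_cast; exact this.symm))
  refine ⟨∑ i, hherm.eigenvalues i ^ 2, by push_cast [htr2]; norm_num, ?_⟩
  calc ∑ i, hherm.eigenvalues i ^ 2 ≤ (∑ i, hherm.eigenvalues i) ^ 2 :=
        Finset.sum_sq_le_sq_sum_of_nonneg fun i _ => h.1.eigenvalues_nonneg i
    _ = 1 := by rw [hsum1]; norm_num

lemma bloch_bound {d : ℕ} (hd : 0 < d) {ι : Type*} [Fintype ι] [DecidableEq ι]
    (l : ι → Matrix (Fin d) (Fin d) ℂ)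
    (hherm : ∀ i, (l i).IsHermitian) (htr : ∀ i, (l i).trace = 0)
    (horth : ∀ i j, (l i * l j).trace = if i = j then (2:ℂ) else 0)
    (ρ : Matrix (Fin d) (Fin d) ℂ) (hρ : IsDensityMatrix ρ)
    (t : ι → ℝ) (ht : ∀ i, (ρ * l i).trace = (t i : ℂ)) :
    ∑ i, (t i)^2 ≤ 2 - 2/d := by
  classical
  have hd' : (d : ℂ) ≠ 0 := Nat.cast_ne_zero.mpr hd.ne'
  set L : Matrix (Fin d) (Fin d) ℂ := ∑ i, (((t i / 2 : ℝ)) : ℂ) • l i with hL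
  set Δ : Matrix (Fin d) (Fin d) ℂ := ρ - ((d:ℂ))⁻¹ • 1 - L with hΔ
  have hTrL : L.trace = 0 := by
    simp [hL, Matrix.trace_sum, Matrix.trace_smul, htr]
  have hTrρL : (ρ * L).trace = ∑ i, ((t i : ℂ))^2 / 2 := by
    rw [hL, Finset.mul_sum]
    rw [Matrix.trace_sum]
    refine Finset.sum_congr rfl fun i _ => ?_
    rw [Matrix.mul_smul, Matrix.trace_smul, ht i, smul_eq_mul]
    push_cast
    ring
  have hTrLρ : (L * ρ).trace = ∑ i, ((t i : ℂ))^2 / 2 := by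
    rw [Matrix.trace_mul_comm, hTrρL]
  have hTrLL : (L * L).trace = ∑ i, ((t i : ℂ))^2 / 2 := by
    rw [hL, Finset.sum_mul]
    rw [Matrix.trace_sum]
    have : ∀ i, ((((t i / 2 : ℝ)) : ℂ) • l i * ∑ j, (((t j / 2 : ℝ)) : ℂ) • l j).trace
        = ((t i : ℂ))^2 / 2 := by
      intro i
      rw [Finset.mul_sum, Matrix.trace_sum]
      have : ∀ j, ((((t i / 2 : ℝ)) : ℂ) • l i * ((((t j / 2 : ℝ)) : ℂ) • l j)).trace
          = (((t i / 2 : ℝ)) : ℂ) * (((t j / 2 : ℝ)) : ℂ) * (if i = j then (2:ℂ) else 0) := by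
        intro j
        rw [Matrix.smul_mul, Matrix.mul_smul, Matrix.trace_smul, Matrix.trace_smul, horth i j,
          smul_eq_mul, smul_eq_mul]
        ring
      rw [Finset.sum_congr rfl fun j _ => this j]
      simp only [mul_ite, mul_zero]
      rw [Finset.sum_ite_eq Finset.univ i]
      simp only [Finset.mem_univ, if_true]
      push_cast
      ring
    rw [Finset.sum_congr rfl fun i _ => this i]
  have hΔherm : Δᴴ = Δ := by
    rw [hΔ, hL]
    simp only [Matrix.conjTranspose_sub, Matrix.conjTranspose_smul, Matrix.conjTranspose_sum,
      Matrix.conjTranspose_one, hρ.1.1.eq]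
    congr 1
    · congr 1
      rw [star_inv₀, star_natCast]
    · refine Finset.sum_congr rfl fun i _ => ?_
      rw [(hherm i).eq, Complex.star_def, Complex.conj_ofReal]
  have hE : (Δᴴ * Δ).trace = ((∑ j, ∑ i, Complex.normSq (Δ i j) : ℝ) : ℂ) := by
    push_cast
    simp only [Matrix.trace, Matrix.diag_apply, Matrix.mul_apply, Matrix.conjTranspose_apply]
    refine Finset.sum_congr rfl fun j _ => Finset.sum_congr rfl fun i _ => ?_
    rw [Complex.star_def, Complex.normSq_eq_conj_mul_self]
  have hexpand : (Δ * Δ).trace = (ρ * ρ).trace - (d:ℂ)⁻¹ - ∑ i, ((t i : ℂ))^2 / 2 := by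
    rw [hΔ]
    simp only [Matrix.sub_mul, Matrix.mul_sub, Matrix.smul_mul, Matrix.mul_smul,
      Matrix.one_mul, Matrix.mul_one, Matrix.trace_sub, Matrix.trace_smul, Matrix.trace_one,
      hTrρL, hTrLρ, hTrLL, hTrL, hρ.2, smul_eq_mul, Fintype.card_fin]
    field_simp
    ring
  obtain ⟨q, hq, hq1⟩ := trace_sq_le_one ρ hρ
  have hcomb : (∑ j, ∑ i, Complex.normSq (Δ i j)) = q - (d:ℝ)⁻¹ - ∑ i, t i ^ 2 / 2 := by
    apply Complex.ofReal_inj.mp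
    rw [← hE, hΔherm, hexpand, hq]
    push_cast
    ring
  have hpos : 0 ≤ ∑ j, ∑ i, Complex.normSq (Δ i j) :=
    Finset.sum_nonneg fun j _ => Finset.sum_nonneg fun i _ => Complex.normSq_nonneg _
  have hdinv : 0 ≤ (d:ℝ)⁻¹ := by positivity
  have hhalf : ∑ i, t i ^ 2 / 2 = (∑ i, t i ^ 2) / 2 := by
    rw [Finset.sum_div]
  rw [div_eq_mul_inv]
  nlinarith [hcomb, hpos, hq1]


lemma traceNorm_sum_outer_le {m k : Type*} [Fintype m] [DecidableEq m] [Fintype k] [DecidableEq k]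
    {N : ℕ} (c : Fin N → ℝ) (hc : ∀ t, 0 ≤ c t)
    (a : Fin N → m → ℂ) (b : Fin N → k → ℂ)
    (X : Matrix m k ℂ) (hX : X = ∑ t, (c t) • Matrix.of (fun i j => a t i * b t j)) :
    traceNorm X ≤ ∑ t, c t * Real.sqrt (∑ i, ‖a t i‖^2) * Real.sqrt (∑ j, ‖b t j‖^2) := by
  classical
  have hH : (Xᴴ * X).IsHermitian := Matrix.isHermitian_conjTranspose_mul_self X
  set μ : k → ℝ := hH.eigenvalues with hμ_def
  have hμ0 : ∀ i, 0 ≤ μ i := fun i =>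
    (Matrix.posSemidef_conjTranspose_mul_self X).eigenvalues_nonneg i
  set w : OrthonormalBasis k ℂ (EuclideanSpace ℂ k) := hH.eigenvectorBasis with hw_def
  have hHw : ∀ i, (Xᴴ * X) *ᵥ ⇑(w i) = μ i • ⇑(w i) := fun i => hH.mulVec_eigenvectorBasis i
  set f : k → EuclideanSpace ℂ m :=
    fun i => (WithLp.equiv 2 (m → ℂ)).symm (X *ᵥ ⇑(w i)) with hf_def
  have hwinner : ∀ i j, (inner ℂ (w i) (w j) : ℂ) = star ⇑(w i) ⬝ᵥ ⇑(w j) := by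
    intro i j
    rw [EuclideanSpace.inner_eq_star_dotProduct]
    exact dotProduct_comm _ _
  have key : ∀ i j, (inner ℂ (f i) (f j) : ℂ) = (μ j : ℂ) * (if i = j then 1 else 0) := by
    intro i j
    have h1 : (inner ℂ (f i) (f j) : ℂ) = star (X *ᵥ ⇑(w i)) ⬝ᵥ (X *ᵥ ⇑(w j)) := by
      rw [EuclideanSpace.inner_eq_star_dotProduct]
      rw [dotProduct_comm]; rfl
    rw [h1, Matrix.star_mulVec, ← Matrix.dotProduct_mulVec, Matrix.mulVec_mulVec, hHw j,
      dotProduct_smul]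
    rw [← hwinner i j, orthonormal_iff_ite.mp w.orthonormal i j]
    simp [smul_eq_mul]
  set σ : k → ℝ := fun i => Real.sqrt (μ i) with hσ_def
  have hσ0 : ∀ i, 0 ≤ σ i := fun i => Real.sqrt_nonneg _
  have hσsq : ∀ i, σ i ^ 2 = μ i := fun i => Real.sq_sqrt (hμ0 i)
  have htn : traceNorm X = ∑ i, σ i := rfl
  have hff : ∀ i, (inner ℂ (f i) (f i) : ℂ) = (μ i : ℂ) := by
    intro i; simpa using key i i
  set S : Finset k := Finset.univ.filter (fun i => σ i ≠ 0) with hS_def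
  set z : k → EuclideanSpace ℂ m := fun i => ((σ i : ℂ))⁻¹ • f i with hz_def
  have hzinner : ∀ i j, (inner ℂ (z i) (z j) : ℂ)
      = ((σ i : ℂ))⁻¹ * (((σ j : ℂ))⁻¹ * ((μ j : ℂ) * (if i = j then 1 else 0))) := by
    intro i j
    simp only [hz_def, inner_smul_left, inner_smul_right, key i j, map_inv₀,
      Complex.conj_ofReal]
    ring
  have hzorth : Orthonormal ℂ (fun i : {i : k // σ i ≠ 0} => z i) := by
    rw [orthonormal_iff_ite]
    rintro ⟨i, hi⟩ ⟨j, hj⟩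
    rw [hzinner i j]
    by_cases hij : i = j
    · subst hij
      have hμσ : (μ i : ℂ) = (σ i : ℂ) ^ 2 := by
        rw [← hσsq i]; push_cast; ring
      simp only [if_pos rfl, Subtype.mk_eq_mk, hμσ]
      have hσne : (σ i : ℂ) ≠ 0 := Complex.ofReal_ne_zero.mpr hi
      field_simp
    · simp [hij, Subtype.mk_eq_mk]
  have hzf : ∀ i, σ i ≠ 0 → (inner ℂ (z i) (f i) : ℂ) = (σ i : ℂ) := by
    intro i hi
    have hσne : (σ i : ℂ) ≠ 0 := Complex.ofReal_ne_zero.mpr hi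
    have hμσ : (μ i : ℂ) = (σ i : ℂ) ^ 2 := by rw [← hσsq i]; push_cast; ring
    rw [hz_def]
    simp only [inner_smul_left, map_inv₀, Complex.conj_ofReal, hff i, hμσ]
    field_simp
  set a' : Fin N → EuclideanSpace ℂ m := fun t => (WithLp.equiv 2 (m → ℂ)).symm (a t)
    with ha'_def
  have hfeq : ∀ i, f i = ∑ t, ((c t : ℂ) * (b t ⬝ᵥ ⇑(w i))) • a' t := by
    intro i
    apply (WithLp.linearEquiv 2 ℂ (m → ℂ)).injective
    rw [map_sum]
    have hL : ∀ (v : m → ℂ),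
        (WithLp.linearEquiv 2 ℂ (m → ℂ)) ((WithLp.equiv 2 (m → ℂ)).symm v) = v :=
      fun v => rfl
    have h1 : (WithLp.linearEquiv 2 ℂ (m → ℂ)) (f i) = X *ᵥ ⇑(w i) := hL _
    have h2 : ∀ t, (WithLp.linearEquiv 2 ℂ (m → ℂ)) (((c t : ℂ) * (b t ⬝ᵥ ⇑(w i))) • a' t)
        = ((c t : ℂ) * (b t ⬝ᵥ ⇑(w i))) • a t := by
      intro t
      rw [_root_.map_smul, ha'_def, hL]
    rw [h1]
    rw [Finset.sum_congr rfl fun t _ => h2 t]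
    funext i0
    simp only [Finset.sum_apply, Pi.smul_apply, smul_eq_mul, Matrix.mulVec,
      dotProduct, hX, Matrix.sum_apply, Matrix.smul_apply, Matrix.of_apply,
      Complex.real_smul]
    simp_rw [Finset.sum_mul]
    rw [Finset.sum_comm]
    refine Finset.sum_congr rfl fun t _ => ?_
    rw [Finset.mul_sum, Finset.sum_mul]
    refine Finset.sum_congr rfl fun j _ => ?_
    ring
  have step1 : ∀ i ∈ S, σ i ≤ ∑ t, c t * (‖b t ⬝ᵥ ⇑(w i)‖ * ‖(inner ℂ (z i) (a' t) : ℂ)‖) := by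
    intro i hi
    have hi' : σ i ≠ 0 := (Finset.mem_filter.mp hi).2
    have h0 : (σ i : ℝ) = Complex.re (inner ℂ (z i) (f i)) := by rw [hzf i hi']; simp
    have hexp2 : (inner ℂ (z i) (f i) : ℂ)
        = ∑ t, ((c t : ℂ) * (b t ⬝ᵥ ⇑(w i))) * inner ℂ (z i) (a' t) := by
      rw [hfeq i, inner_sum]
      simp [inner_smul_right]
    rw [h0, hexp2]
    calc Complex.re (∑ t, ((c t : ℂ) * (b t ⬝ᵥ ⇑(w i))) * inner ℂ (z i) (a' t))
        ≤ ‖∑ t, ((c t : ℂ) * (b t ⬝ᵥ ⇑(w i))) * inner ℂ (z i) (a' t)‖ := Complex.re_le_norm _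
      _ ≤ ∑ t, ‖((c t : ℂ) * (b t ⬝ᵥ ⇑(w i))) * inner ℂ (z i) (a' t)‖ := norm_sum_le _ _
      _ = ∑ t, c t * (‖b t ⬝ᵥ ⇑(w i)‖ * ‖(inner ℂ (z i) (a' t) : ℂ)‖) := by
          congr 1; funext t
          rw [norm_mul, norm_mul, Complex.norm_real, Real.norm_eq_abs, abs_of_nonneg (hc t),
            mul_assoc]
  have CS : ∀ (g h : k → ℝ), (∀ i, 0 ≤ g i) → (∀ i, 0 ≤ h i) →
      ∑ i ∈ S, g i * h i ≤ Real.sqrt (∑ i ∈ S, g i ^ 2) * Real.sqrt (∑ i ∈ S, h i ^ 2) := by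
    intro g h hg hh
    have h2 := Finset.sum_mul_sq_le_sq_mul_sq S g h
    have hnn : 0 ≤ ∑ i ∈ S, g i * h i :=
      Finset.sum_nonneg fun i _ => mul_nonneg (hg i) (hh i)
    calc ∑ i ∈ S, g i * h i = Real.sqrt ((∑ i ∈ S, g i * h i) ^ 2) :=
          (Real.sqrt_sq hnn).symm
      _ ≤ Real.sqrt ((∑ i ∈ S, g i ^ 2) * ∑ i ∈ S, h i ^ 2) := Real.sqrt_le_sqrt h2
      _ = _ := Real.sqrt_mul (Finset.sum_nonneg fun i _ => sq_nonneg _) _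
  have besselb : ∀ t, ∑ i ∈ S, ‖b t ⬝ᵥ ⇑(w i)‖ ^ 2 ≤ ∑ j, ‖b t j‖ ^ 2 := by
    intro t
    have h1 := w.orthonormal.sum_inner_products_le
      (s := S) ((WithLp.equiv 2 (k → ℂ)).symm (star (b t)))
    have h2 : ∀ i, ‖(inner ℂ (w i) ((WithLp.equiv 2 (k → ℂ)).symm (star (b t))) : ℂ)‖
        = ‖b t ⬝ᵥ ⇑(w i)‖ := by
      intro i
      rw [EuclideanSpace.inner_eq_star_dotProduct]
      have : (star ((WithLp.equiv 2 (k → ℂ)) (w i))) ⬝ᵥ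
          ((WithLp.equiv 2 (k → ℂ)) ((WithLp.equiv 2 (k → ℂ)).symm (star (b t))))
          = star (b t ⬝ᵥ ⇑(w i)) := by
        rw [Equiv.apply_symm_apply, star_dotProduct]
        simp [dotProduct_comm]
      rw [← norm_star (b t ⬝ᵥ ⇑(w i)), ← this]
      exact congrArg norm (dotProduct_comm _ _)
    have h3 : ‖(WithLp.equiv 2 (k → ℂ)).symm (star (b t))‖ ^ 2 = ∑ j, ‖b t j‖ ^ 2 := by
      rw [EuclideanSpace.norm_eq, Real.sq_sqrt (Finset.sum_nonneg fun j _ => sq_nonneg _)]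
      congr 1; funext j
      simp [PiLp.toLp_apply]
    calc ∑ i ∈ S, ‖b t ⬝ᵥ ⇑(w i)‖ ^ 2
        = ∑ i ∈ S, ‖(inner ℂ (w i) ((WithLp.equiv 2 (k → ℂ)).symm (star (b t))) : ℂ)‖ ^ 2 :=
          Finset.sum_congr rfl fun i _ => by rw [h2 i]
      _ ≤ ‖(WithLp.equiv 2 (k → ℂ)).symm (star (b t))‖ ^ 2 := h1
      _ = ∑ j, ‖b t j‖ ^ 2 := h3
  have bessela : ∀ t, ∑ i ∈ S, ‖(inner ℂ (z i) (a' t) : ℂ)‖ ^ 2 ≤ ∑ i0, ‖a t i0‖ ^ 2 := by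
    intro t
    have h1 := hzorth.sum_inner_products_le
      (s := (Finset.univ : Finset {i : k // σ i ≠ 0})) (a' t)
    have h2 : ∑ i ∈ S, ‖(inner ℂ (z i) (a' t) : ℂ)‖ ^ 2
        = ∑ i : {i : k // σ i ≠ 0}, ‖(inner ℂ (z i.1) (a' t) : ℂ)‖ ^ 2 := by
      apply Finset.sum_subtype
      intro x; simp [hS_def]
    have h3 : ‖a' t‖ ^ 2 = ∑ i0, ‖a t i0‖ ^ 2 := by
      rw [ha'_def, EuclideanSpace.norm_eq,
        Real.sq_sqrt (Finset.sum_nonneg fun j _ => sq_nonneg _)]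
      refine Finset.sum_congr rfl fun i0 _ => ?_
      simp [PiLp.toLp_apply]
    rw [h2]
    exact h3 ▸ h1
  -- assemble
  have hsum : traceNorm X = ∑ i ∈ S, σ i := by
    rw [htn, hS_def, Finset.sum_filter_ne_zero]
  rw [hsum]
  calc ∑ i ∈ S, σ i
      ≤ ∑ i ∈ S, ∑ t, c t * (‖b t ⬝ᵥ ⇑(w i)‖ * ‖(inner ℂ (z i) (a' t) : ℂ)‖) :=
        Finset.sum_le_sum step1
    _ = ∑ t, c t * ∑ i ∈ S, ‖b t ⬝ᵥ ⇑(w i)‖ * ‖(inner ℂ (z i) (a' t) : ℂ)‖ := by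
        rw [Finset.sum_comm]
        congr 1; funext t
        rw [Finset.mul_sum]
    _ ≤ ∑ t, c t * (Real.sqrt (∑ i ∈ S, ‖b t ⬝ᵥ ⇑(w i)‖ ^ 2)
          * Real.sqrt (∑ i ∈ S, ‖(inner ℂ (z i) (a' t) : ℂ)‖ ^ 2)) := by
        apply Finset.sum_le_sum
        intro t _
        exact mul_le_mul_of_nonneg_left
          (CS _ _ (fun i => norm_nonneg _) (fun i => norm_nonneg _)) (hc t)
    _ ≤ ∑ t, c t * Real.sqrt (∑ i, ‖a t i‖ ^ 2) * Real.sqrt (∑ j, ‖b t j‖ ^ 2) := by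
        apply Finset.sum_le_sum
        intro t _
        rw [mul_assoc]
        apply mul_le_mul_of_nonneg_left _ (hc t)
        rw [mul_comm]
        apply mul_le_mul
        · exact Real.sqrt_le_sqrt (bessela t)
        · exact Real.sqrt_le_sqrt (besselb t)
        · exact Real.sqrt_nonneg _
        · exact Real.sqrt_nonneg _


/-- **Shen's criterion** (Gell-Mann bases, `κ_A = κ_B = 2`): for a separable state,
`‖M̂_{x,y}^{(n)}‖_tr ≤ (1/2)√((2n x² + d_A² − d_A)(2n y² + d_B² − d_B))`. -/
theorem traceNorm_normExtCorrTensor_le_of_separable_gellMann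
    (dA dB : ℕ) (hdA : 2 ≤ dA) (hdB : 2 ≤ dB)
    (lA : Fin (dA ^ 2 - 1) → Matrix (Fin dA) (Fin dA) ℂ)
    (lB : Fin (dB ^ 2 - 1) → Matrix (Fin dB) (Fin dB) ℂ)
    (hlAherm : ∀ i, (lA i).IsHermitian)
    (hlBherm : ∀ j, (lB j).IsHermitian)
    (hlAtr : ∀ i, (lA i).trace = 0)
    (hlBtr : ∀ j, (lB j).trace = 0)
    (hlAorth : ∀ i j, (lA i * lA j).trace = if i = j then (2 : ℂ) else 0)
    (hlBorth : ∀ i j, (lB i * lB j).trace = if i = j then (2 : ℂ) else 0)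
    (hlAspan : ∀ X : Matrix (Fin dA) (Fin dA) ℂ, X.trace = 0 →
      X ∈ Submodule.span ℂ (Set.range lA))
    (hlBspan : ∀ X : Matrix (Fin dB) (Fin dB) ℂ, X.trace = 0 →
      X ∈ Submodule.span ℂ (Set.range lB))
    (ρ : Matrix (Fin dA × Fin dB) (Fin dA × Fin dB) ℂ)
    (hρ : IsDensityMatrix ρ)
    (hsep : IsSeparableState dA dB ρ)
    (r : Fin (dA ^ 2 - 1) → ℂ) (s : Fin (dB ^ 2 - 1) → ℂ)
    (T : Matrix (Fin (dA ^ 2 - 1)) (Fin (dB ^ 2 - 1)) ℂ)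
    (hexp : ρ = ((dA * dB : ℂ))⁻¹ •
      ((1 : Matrix (Fin dA × Fin dB) (Fin dA × Fin dB) ℂ)
        + ∑ i, r i • (lA i ⊗ₖ (1 : Matrix (Fin dB) (Fin dB) ℂ))
        + ∑ j, s j • ((1 : Matrix (Fin dA) (Fin dA) ℂ) ⊗ₖ lB j)
        + ∑ i, ∑ j, T i j • (lA i ⊗ₖ lB j)))
    (x y : ℝ) (hx : 0 ≤ x) (hy : 0 ≤ y) (n : ℕ) (hn : 0 < n) :
    traceNorm (normExtCorrTensor dA dB n x y r s T) ≤
      (1 / 2) * Real.sqrt ((2 * n * x ^ 2 + (dA : ℝ) ^ 2 - dA) *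
        (2 * n * y ^ 2 + (dB : ℝ) ^ 2 - dB)) := by
    classical
  obtain ⟨N, p, ρA, ρB, hp0, hp1, hA, hB, hrep⟩ := hsep
  have hdA1 : (1:ℝ) ≤ (dA:ℝ) := by exact_mod_cast Nat.one_le_of_lt hdA
  have hdB1 : (1:ℝ) ≤ (dB:ℝ) := by exact_mod_cast Nat.one_le_of_lt hdB
  have hdA' : (dA:ℂ) ≠ 0 := Nat.cast_ne_zero.mpr (by omega)
  have hdB' : (dB:ℂ) ≠ 0 := Nat.cast_ne_zero.mpr (by omega)
  have hdAR : (dA:ℝ) ≠ 0 := by positivity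
  have hdBR : (dB:ℝ) ≠ 0 := by positivity
  -- real Bloch components of the factors
  set τA : Fin N → Fin (dA^2-1) → ℝ := fun k i => ((ρA k * lA i).trace).re with hτA
  set τB : Fin N → Fin (dB^2-1) → ℝ := fun k j => ((ρB k * lB j).trace).re with hτB
  have htA : ∀ k i, (ρA k * lA i).trace = ((τA k i : ℝ) : ℂ) := fun k i =>
    herm_trace_real _ _ (hA k).1.1 (hlAherm i)
  have htB : ∀ k j, (ρB k * lB j).trace = ((τB k j : ℝ) : ℂ) := fun k j =>
    herm_trace_real _ _ (hB k).1.1 (hlBherm j)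
  have hbA : ∀ k, ∑ i, (τA k i)^2 ≤ 2 - 2/dA := fun k =>
    bloch_bound (by omega) lA hlAherm hlAtr hlAorth (ρA k) (hA k) (τA k) (htA k)
  have hbB : ∀ k, ∑ j, (τB k j)^2 ≤ 2 - 2/dB := fun k =>
    bloch_bound (by omega) lB hlBherm hlBtr hlBorth (ρB k) (hB k) (τB k) (htB k)
  -- trace of ρ against a Kronecker product, two ways
  have htrace_hexp : ∀ (P : Matrix (Fin dA) (Fin dA) ℂ) (Q : Matrix (Fin dB) (Fin dB) ℂ),
      (ρ * (P ⊗ₖ Q)).trace = ((dA * dB : ℂ))⁻¹ *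
        (P.trace * Q.trace
          + (∑ i, r i * ((lA i * P).trace * Q.trace))
          + (∑ j, s j * (P.trace * (lB j * Q).trace))
          + (∑ i, ∑ j, T i j * ((lA i * P).trace * (lB j * Q).trace))) := by
    intro P Q
    rw [hexp, Matrix.smul_mul, Matrix.trace_smul, smul_eq_mul]
    congr 1
    rw [Matrix.add_mul, Matrix.add_mul, Matrix.add_mul, Matrix.trace_add, Matrix.trace_add,
      Matrix.trace_add]
    congr 1
    · congr 1
      · congr 1
        · rw [Matrix.one_mul, Matrix.trace_kronecker]
        · rw [Finset.sum_mul, Matrix.trace_sum]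
          refine Finset.sum_congr rfl fun i _ => ?_
          rw [Matrix.smul_mul, Matrix.trace_smul, ← Matrix.mul_kronecker_mul,
            Matrix.trace_kronecker, Matrix.one_mul, smul_eq_mul]
      · rw [Finset.sum_mul, Matrix.trace_sum]
        refine Finset.sum_congr rfl fun j _ => ?_
        rw [Matrix.smul_mul, Matrix.trace_smul, ← Matrix.mul_kronecker_mul,
          Matrix.trace_kronecker, Matrix.one_mul, smul_eq_mul]
    · rw [Finset.sum_mul, Matrix.trace_sum]
      refine Finset.sum_congr rfl fun i _ => ?_
      rw [Finset.sum_mul, Matrix.trace_sum]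
      refine Finset.sum_congr rfl fun j _ => ?_
      rw [Matrix.smul_mul, Matrix.trace_smul, ← Matrix.mul_kronecker_mul,
        Matrix.trace_kronecker, smul_eq_mul]
  have htrace_rep : ∀ (P : Matrix (Fin dA) (Fin dA) ℂ) (Q : Matrix (Fin dB) (Fin dB) ℂ),
      (ρ * (P ⊗ₖ Q)).trace
        = ∑ k, (p k : ℂ) * ((ρA k * P).trace * (ρB k * Q).trace) := by
    intro P Q
    rw [hrep, Finset.sum_mul, Matrix.trace_sum]
    refine Finset.sum_congr rfl fun k _ => ?_
    rw [Matrix.smul_mul, Matrix.trace_smul, ← Matrix.mul_kronecker_mul,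
      Matrix.trace_kronecker, smul_eq_mul]
  -- extraction of r
  have hr : ∀ i0, r i0 = (dA:ℂ)/2 * ∑ k, (p k:ℂ) * (τA k i0 : ℂ) := by
    intro i0
    have h1 := htrace_hexp (lA i0) 1
    have h2 := htrace_rep (lA i0) 1
    rw [h1] at h2
    simp only [Matrix.trace_one, Matrix.mul_one, hlAtr, hlAorth, hlBtr, htA, (fun k => (hB k).2),
      mul_zero, zero_mul, mul_one, Finset.sum_const_zero, add_zero, zero_add,
      mul_ite, ite_mul, Fintype.card_fin] at h2
    rw [Finset.sum_ite_eq' Finset.univ i0 (fun i => r i * ((2:ℂ) * (dB:ℂ)))] at h2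
    simp only [Finset.mem_univ, if_true] at h2
    field_simp at h2
    have h2dB : (2 * (dB:ℂ)) ≠ 0 := by simp [hdB']
    apply mul_right_cancel₀ h2dB
    linear_combination (dB:ℂ) * h2
  -- extraction of s
  have hs : ∀ j0, s j0 = (dB:ℂ)/2 * ∑ k, (p k:ℂ) * (τB k j0 : ℂ) := by
    intro j0
    have h1 := htrace_hexp 1 (lB j0)
    have h2 := htrace_rep 1 (lB j0)
    rw [h1] at h2
    simp only [Matrix.trace_one, Matrix.mul_one, hlAtr, hlBorth, hlBtr, htB,
      (fun k => (hA k).2), mul_zero, zero_mul, mul_one, one_mul, Finset.sum_const_zero,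
      add_zero, zero_add, mul_ite, ite_mul, Fintype.card_fin] at h2
    rw [Finset.sum_ite_eq' Finset.univ j0 (fun j => s j * ((dA:ℂ) * 2))] at h2
    simp only [Finset.mem_univ, if_true] at h2
    field_simp at h2
    have h2dA : (2 * (dA:ℂ)) ≠ 0 := by simp [hdA']
    apply mul_right_cancel₀ h2dA
    simp only [ite_self, Finset.sum_const_zero, add_zero] at h2
    linear_combination h2
  -- extraction of T
  have hT : ∀ i0 j0, T i0 j0
      = (dA:ℂ) * (dB:ℂ) / 4 * ∑ k, (p k:ℂ) * ((τA k i0 : ℂ) * (τB k j0 : ℂ)) := by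
    intro i0 j0
    have h1 := htrace_hexp (lA i0) (lB j0)
    have h2 := htrace_rep (lA i0) (lB j0)
    rw [h1] at h2
    simp only [Matrix.mul_one, hlAtr, hlBtr, hlAorth, hlBorth, htA, htB, mul_zero, zero_mul,
      mul_one, Finset.sum_const_zero, add_zero, zero_add, mul_ite, ite_mul,
      Finset.sum_ite_eq', Finset.mem_univ, if_true, Finset.sum_ite_irrel,
      Finset.sum_const_zero] at h2
    field_simp at h2
    have h4 : (4:ℂ) ≠ 0 := by norm_num
    apply mul_right_cancel₀ h4
    simp only [mul_assoc] at h2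
    linear_combination h2
  -- the decomposition of the extended correlation tensor
  set a : Fin N → (Fin n ⊕ Fin (dA^2-1)) → ℂ :=
    fun k => Sum.elim (fun _ => ((x:ℝ):ℂ)) (fun i => (((dA/2 : ℝ)):ℂ) * ((τA k i : ℝ) : ℂ))
    with ha
  set b : Fin N → (Fin n ⊕ Fin (dB^2-1)) → ℂ :=
    fun k => Sum.elim (fun _ => ((y:ℝ):ℂ)) (fun j => (((dB/2 : ℝ)):ℂ) * ((τB k j : ℝ) : ℂ))
    with hb
  have hp1' : (∑ k, ((p k:ℝ):ℂ)) = 1 := by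
    rw [← Complex.ofReal_sum, hp1, Complex.ofReal_one]
  have hM : normExtCorrTensor dA dB n x y r s T
      = ∑ k, p k • Matrix.of (fun i j => a k i * b k j) := by
    ext i j
    rw [Matrix.sum_apply]
    simp only [Matrix.smul_apply, Matrix.of_apply, Complex.real_smul]
    cases i with
    | inl i1 =>
      cases j with
      | inl j1 =>
        simp only [normExtCorrTensor, Matrix.fromBlocks_apply₁₁, Matrix.of_apply, ha, hb,
          Sum.elim_inl]
        rw [← Finset.sum_mul, hp1', one_mul]
        push_cast
        ring
      | inr j1 =>
        simp only [normExtCorrTensor, Matrix.fromBlocks_apply₁₂, Matrix.of_apply, ha, hb,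
          Sum.elim_inl, Sum.elim_inr]
        rw [hs j1, Finset.mul_sum, Finset.mul_sum]
        refine Finset.sum_congr rfl fun k _ => ?_
        push_cast
        ring
    | inr i1 =>
      cases j with
      | inl j1 =>
        simp only [normExtCorrTensor, Matrix.fromBlocks_apply₂₁, Matrix.of_apply, ha, hb,
          Sum.elim_inl, Sum.elim_inr]
        rw [hr i1, Finset.mul_sum, Finset.mul_sum]
        refine Finset.sum_congr rfl fun k _ => ?_
        push_cast
        ring
      | inr j1 =>
        simp only [normExtCorrTensor, Matrix.fromBlocks_apply₂₂, Matrix.of_apply, ha, hb,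
          Sum.elim_inr]
        rw [hT i1 j1, Finset.mul_sum]
        refine Finset.sum_congr rfl fun k _ => ?_
        push_cast
        ring
  -- norm bounds on the vectors
  set CA : ℝ := (n:ℝ) * x^2 + ((dA:ℝ)^2 - (dA:ℝ))/2 with hCA
  set CB : ℝ := (n:ℝ) * y^2 + ((dB:ℝ)^2 - (dB:ℝ))/2 with hCB
  have hCA0 : 0 ≤ CA := by
    have h1 : 0 ≤ (n:ℝ) * x^2 := by positivity
    have h2 : 0 ≤ (dA:ℝ) * ((dA:ℝ) - 1) :=
      mul_nonneg (by linarith) (by linarith)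
    rw [hCA]; nlinarith
  have hCB0 : 0 ≤ CB := by
    have h1 : 0 ≤ (n:ℝ) * y^2 := by positivity
    have h2 : 0 ≤ (dB:ℝ) * ((dB:ℝ) - 1) :=
      mul_nonneg (by linarith) (by linarith)
    rw [hCB]; nlinarith
  have hna : ∀ k, ∑ i, ‖a k i‖^2 ≤ CA := by
    intro k
    rw [Fintype.sum_sum_type]
    have h1 : ∑ _i : Fin n, ‖a k (Sum.inl _i)‖^2 = (n:ℝ) * x^2 := by
      simp [ha, Complex.norm_real, sq_abs, Finset.sum_const, nsmul_eq_mul]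
    have h2 : ∑ i, ‖a k (Sum.inr i)‖^2 ≤ ((dA:ℝ)^2 - (dA:ℝ))/2 := by
      have he : ∀ i, ‖a k (Sum.inr i)‖^2 = ((dA:ℝ)/2)^2 * (τA k i)^2 := by
        intro i
        simp only [ha, Sum.elim_inr, norm_mul, Complex.norm_real, Real.norm_eq_abs]
        rw [mul_pow, sq_abs, sq_abs]
      rw [Finset.sum_congr rfl fun i _ => he i, ← Finset.mul_sum]
      calc ((dA:ℝ)/2)^2 * ∑ i, (τA k i)^2 ≤ ((dA:ℝ)/2)^2 * (2 - 2/dA) := by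
            apply mul_le_mul_of_nonneg_left (hbA k) (by positivity)
        _ = ((dA:ℝ)^2 - (dA:ℝ))/2 := by field_simp
    rw [hCA]
    linarith
  have hnb : ∀ k, ∑ j, ‖b k j‖^2 ≤ CB := by
    intro k
    rw [Fintype.sum_sum_type]
    have h1 : ∑ _i : Fin n, ‖b k (Sum.inl _i)‖^2 = (n:ℝ) * y^2 := by
      simp [hb, Complex.norm_real, sq_abs, Finset.sum_const, nsmul_eq_mul]
    have h2 : ∑ j, ‖b k (Sum.inr j)‖^2 ≤ ((dB:ℝ)^2 - (dB:ℝ))/2 := by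
      have he : ∀ j, ‖b k (Sum.inr j)‖^2 = ((dB:ℝ)/2)^2 * (τB k j)^2 := by
        intro j
        simp only [hb, Sum.elim_inr, norm_mul, Complex.norm_real, Real.norm_eq_abs]
        rw [mul_pow, sq_abs, sq_abs]
      rw [Finset.sum_congr rfl fun j _ => he j, ← Finset.mul_sum]
      calc ((dB:ℝ)/2)^2 * ∑ j, (τB k j)^2 ≤ ((dB:ℝ)/2)^2 * (2 - 2/dB) := by
            apply mul_le_mul_of_nonneg_left (hbB k) (by positivity)
        _ = ((dB:ℝ)^2 - (dB:ℝ))/2 := by field_simp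
    rw [hCB]
    linarith
  have key := traceNorm_sum_outer_le p hp0 a b (normExtCorrTensor dA dB n x y r s T) hM
  have hRHS : Real.sqrt CA * Real.sqrt CB
      = 1 / 2 * Real.sqrt ((2 * n * x ^ 2 + (dA : ℝ) ^ 2 - dA) *
        (2 * n * y ^ 2 + (dB : ℝ) ^ 2 - dB)) := by
    rw [show 2 * (n:ℝ) * x ^ 2 + (dA : ℝ) ^ 2 - dA = 2 * CA by rw [hCA]; ring,
      show 2 * (n:ℝ) * y ^ 2 + (dB : ℝ) ^ 2 - dB = 2 * CB by rw [hCB]; ring,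
      show (2 * CA) * (2 * CB) = 4 * (CA * CB) by ring,
      Real.sqrt_mul (by norm_num : (0:ℝ) ≤ 4), Real.sqrt_mul hCA0,
      show (4:ℝ) = 2 ^ 2 by norm_num, Real.sqrt_sq (by norm_num : (0:ℝ) ≤ 2)]
    ring
  rw [← hRHS]
  calc traceNorm (normExtCorrTensor dA dB n x y r s T)
      ≤ ∑ k, p k * Real.sqrt (∑ i, ‖a k i‖^2) * Real.sqrt (∑ j, ‖b k j‖^2) := key
    _ ≤ ∑ k, p k * (Real.sqrt CA * Real.sqrt CB) := by
        refine Finset.sum_le_sum fun k _ => ?_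
        rw [mul_assoc]
        refine mul_le_mul_of_nonneg_left ?_ (hp0 k)
        exact mul_le_mul (Real.sqrt_le_sqrt (hna k)) (Real.sqrt_le_sqrt (hnb k))
          (Real.sqrt_nonneg _) (Real.sqrt_nonneg _)
    _ = Real.sqrt CA * Real.sqrt CB := by rw [← Finset.sum_mul, hp1, one_mul]
end
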